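/- arXiv:2108.06402 — 2 statements merged into one kernel-verified Lean document; each statement's English description precedes it below -/
import Mathlib

section
/- Suppose g₁, g₂ ∈ E₊(𝔣) generate a free rank-2 finite-index subgroup of E₊(𝔣), that δ([g₁^m | g₂^m]) = −δ([g₂^m | g₁^m]) = 1 for every integer m ≥ 1, that σ₂(g₁) > σ₁(g₁)⁻² > σ₁(g₁)⁻¹ > 1 and σ₁(g₂) < σ₂(g₂) < 1, and that Log(g_i) ∈ B(l_i(M₁), r) for i = 1,2, where r, M₁ > 0. Let π ∈ F be totally positive. Then there exists L > 0 such that for every integer l > L there exists α ∈ π_ℋ⁻¹E₊(𝔣) with α ∈ C([g₁^l | g₂^l]) ∪ C([g₂^l | g₁^l]) ∪ C(1, g₁^l g₂^l) and Log(α) ∈ B(−l₀(l·M₁), 4·l·r). -/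
noncomputable section

open Filter Set

/-- `ℝ³`, the target of the embedding of the totally real cubic field `F`
via its three real embeddings. -/
abbrev V3 := Fin 3 → ℝ

/-- All coordinates positive (totally positive). -/
def IsPos (x : V3) : Prop := ∀ i, 0 < x i

/-- Coordinatewise logarithm `Log`. -/
def Log3 (x : V3) : V3 := fun i => Real.log (x i)

/-- `l_i(M)`: the vector in the trace-zero hyperplane with entry `M` in place `i`
and `-M/2` in the other places. -/
def lvec (i : Fin 3) (M : ℝ) : V3 := fun j => if j = i then M else -M / 2

/-- `δ(x₁,x₂,x₃)`: sign of the determinant of the matrix with columns `x₁, x₂, x₃`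
(with `sign 0 = 0`). -/
def delta3 (x₁ x₂ x₃ : V3) : ℝ :=
  Real.sign (Matrix.det (Matrix.of fun i j : Fin 3 => ![x₁ i, x₂ i, x₃ i] j))

/-- `δ([x ∣ y]) = δ(1, x, x·y)`. -/
def deltaB (x y : V3) : ℝ := delta3 1 x (x * y)

/-- Projection `z ↦ z_ℋ = (z₁z₂z₃)^(-1/3)·z`. -/
def projH (x : V3) : V3 := fun i => (x 0 * x 1 * x 2) ^ (-(1 / 3) : ℝ) * x i

/-- Abstraction of `E₊(𝔣)`: a group of totally positive vectors of norm one whose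
`Log`-image is a full lattice in the trace-zero hyperplane `ℋ`. -/
def IsUnitLattice (E : Subgroup V3ˣ) : Prop :=
  (∀ u ∈ E, IsPos (u : V3)) ∧
  (∀ u ∈ E, Log3 (u : V3) 0 + Log3 (u : V3) 1 + Log3 (u : V3) 2 = 0) ∧
  ∃ u ∈ E, ∃ v ∈ E, LinearIndependent ℝ ![Log3 (u : V3), Log3 (v : V3)] ∧
    ∀ w ∈ E, ∃ m n : ℤ, Log3 (w : V3) = (m : ℝ) • Log3 (u : V3) + (n : ℝ) • Log3 (v : V3)

/-- `⟨g₁, g₂⟩` is a subgroup of `E`, free of rank `2` and of finite index in `E`. -/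
def FreeRank2FinIndex (E : Subgroup V3ˣ) (g₁ g₂ : V3ˣ) : Prop :=
  g₁ ∈ E ∧ g₂ ∈ E ∧
  (∀ m n : ℤ, g₁ ^ m * g₂ ^ n = 1 → m = 0 ∧ n = 0) ∧
  (Subgroup.closure {g₁, g₂}).relIndex E ≠ 0

/-- Open simplicial cone on one generator (a ray). -/
def cone1 (v : V3) : Set V3 := {x | ∃ c : ℝ, 0 < c ∧ x = c • v}

/-- Open simplicial cone on two generators. -/
def cone2 (v w : V3) : Set V3 := {x | ∃ c d : ℝ, 0 < c ∧ 0 < d ∧ x = c • v + d • w}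

/-- Open simplicial cone on three generators. -/
def cone3 (v w z : V3) : Set V3 :=
  {x | ∃ c d e : ℝ, 0 < c ∧ 0 < d ∧ 0 < e ∧ x = c • v + d • w + e • z}

/-- `C([x ∣ y]) = C(1, x, x·y)`. -/
def coneB (x y : V3) : Set V3 := cone3 1 x (x * y)

/-- The first standard basis vector of `ℝ³`. -/
def eOne : V3 := ![1, 0, 0]

/-- `C̄_{e₁}`-operation: the points of `ℝ³` brought into `S` by every sufficiently
small perturbation by `e₁`. -/
def closE1 (S : Set V3) : Set V3 :=
  {x | ∃ ε : ℝ, 0 < ε ∧ ∀ h : ℝ, 0 < h → h < ε → x + h • eOne ∈ S}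

/-- `C̄_{e₁}([x ∣ y])`. -/
def coneBbar (x y : V3) : Set V3 := closE1 (coneB x y)

/-- Multiplicative translate `v·S` of a subset of `ℝ³` (coordinatewise product). -/
def mulSet (v : V3) (S : Set V3) : Set V3 := (fun x => v * x) '' S

/-- The coordinates of `Log(α_ℋ)`. -/
def logHc (α : V3) (i : Fin 3) : ℝ :=
  Real.log (α i) - (Real.log (α 0) + Real.log (α 1) + Real.log (α 2)) / 3

/-- The projection `φ_{(g₁,g₂)} : ℝ₊³ → ℝ²`, given by the coordinates of `Log(α_ℋ)`
in the basis `(Log g₁, Log g₂)` of `ℋ` (the explicit formula of the paper). -/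
def phi (g₁ g₂ α : V3) : ℝ × ℝ :=
  ((logHc α 1 * Real.log (g₂ 0) - logHc α 0 * Real.log (g₂ 1)) /
      (Real.log (g₂ 0) * Real.log (g₁ 1) - Real.log (g₂ 1) * Real.log (g₁ 0)),
    (logHc α 1 * Real.log (g₁ 0) - logHc α 0 * Real.log (g₁ 1)) /
      (Real.log (g₁ 0) * Real.log (g₂ 1) - Real.log (g₁ 1) * Real.log (g₂ 0)))

/-- The straight segment `L(t)` from `(1,1,1)` to `v`. -/
def seg (v : V3) (t : ℝ) : V3 := fun j => 1 + t * (v j - 1)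

/-- `x_{i,l}(t)`: first coordinate of `𝒞_{i,l}(t) = φ_{(g₁,g₂)}(L_{i,l}(t))`,
where `g` is `g₁` or `g₂`. -/
def xC (g₁ g₂ g : V3) (l : ℕ) (t : ℝ) : ℝ := (phi g₁ g₂ (seg (g ^ l) t)).1

/-- `y_{i,l}(t)`: second coordinate of `𝒞_{i,l}(t)`. -/
def yC (g₁ g₂ g : V3) (l : ℕ) (t : ℝ) : ℝ := (phi g₁ g₂ (seg (g ^ l) t)).2

/-- The Colmez domain `ℬ = C̄_{e₁}([ε₁∣ε₂]) ∪ C̄_{e₁}([ε₂∣ε₁])`. -/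
def Bbar (ε₁ ε₂ : V3) : Set V3 := coneBbar ε₁ ε₂ ∪ coneBbar ε₂ ε₁

/-- The explicit cone decomposition of `ℬ` with chosen boundary cones. -/
def BsetC (ε₁ ε₂ : V3) : Set V3 :=
  cone1 1 ∪ cone2 1 ε₁ ∪ cone2 1 ε₂ ∪ cone2 1 (ε₁ * ε₂) ∪
    cone3 1 ε₁ (ε₁ * ε₂) ∪ cone3 1 ε₂ (ε₁ * ε₂)

/-- The explicit cone decomposition of `ℬ₁`. -/
def B1setC (ε₂ π : V3) : Set V3 :=
  cone1 π ∪ cone2 π (ε₂ * π) ∪ cone2 1 π ∪ cone2 1 (ε₂ * π) ∪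
    cone3 1 ε₂ (ε₂ * π) ∪ cone3 1 π (ε₂ * π)

/-- The explicit cone decomposition of `ℬ₂`. -/
def B2setC (ε₁ π : V3) : Set V3 :=
  cone1 π ∪ cone2 π (ε₁ * π) ∪ cone2 1 π ∪ cone2 1 (ε₁ * π) ∪
    cone3 1 ε₁ (ε₁ * π) ∪ cone3 1 π (ε₁ * π)


set_option maxHeartbeats 4000000

open Filter

lemma key_core (ρ σ η : ℝ) (hρ : 0 < ρ) (hσ : 0 < σ)
    (h : Real.log ρ + η * Real.log σ < 0) : ρ * σ ^ η < 1 := by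
  rw [Real.rpow_def_of_pos hσ]
  calc ρ * Real.exp (Real.log σ * η) = Real.exp (Real.log ρ + η * Real.log σ) := by
        rw [Real.exp_add, Real.exp_log hρ]; ring_nf
    _ < 1 := Real.exp_lt_one_iff.mpr h

lemma dom_bound (η W ρ σ c : ℝ) (hη : 0 < η) (hW : 0 ≤ W) (hρ : 0 < ρ) (hσ : 0 < σ)
    (key : ρ * σ ^ η < 1) (hc : 0 < c) :
    ∀ᶠ l : ℕ in atTop, W * ρ ^ l * σ ^ (⌈η * (l:ℝ)⌉₊ : ℕ) < c := by
  set δ := ρ * σ ^ η with hδ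
  have hδ0 : 0 < δ := mul_pos hρ (Real.rpow_pos_of_pos hσ η)
  have hbound : ∀ l : ℕ, W * ρ ^ l * σ ^ (⌈η * (l:ℝ)⌉₊ : ℕ) ≤ (W * max σ 1) * δ ^ l := by
    intro l
    have h1 : σ ^ (⌈η * (l:ℝ)⌉₊ : ℕ) ≤ max σ 1 * (σ ^ η) ^ l := by
      have hcast : σ ^ (⌈η * (l:ℝ)⌉₊ : ℕ) = σ ^ ((⌈η * (l:ℝ)⌉₊ : ℕ) : ℝ) :=
        (Real.rpow_natCast σ _).symm
      have hexp : (σ ^ η) ^ l = σ ^ (η * l) := by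
        rw [← Real.rpow_natCast (σ ^ η) l, ← Real.rpow_mul hσ.le]
      rcases le_or_gt σ 1 with hs | hs
      · have : σ ^ ((⌈η * (l:ℝ)⌉₊ : ℕ) : ℝ) ≤ σ ^ (η * l) :=
          Real.rpow_le_rpow_of_exponent_ge hσ hs (Nat.le_ceil _)
        rw [hcast, hexp]
        calc σ ^ ((⌈η * (l:ℝ)⌉₊ : ℕ) : ℝ) ≤ σ ^ (η * l) := this
          _ ≤ max σ 1 * σ ^ (η * l) := by
              nlinarith [Real.rpow_pos_of_pos hσ (η * l), le_max_right σ 1]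
      · have hle : ((⌈η * (l:ℝ)⌉₊ : ℕ) : ℝ) ≤ η * l + 1 :=
          le_of_lt (Nat.ceil_lt_add_one (by positivity))
        have : σ ^ ((⌈η * (l:ℝ)⌉₊ : ℕ) : ℝ) ≤ σ ^ (η * l + 1) :=
          Real.rpow_le_rpow_of_exponent_le hs.le hle
        rw [hcast, hexp]
        calc σ ^ ((⌈η * (l:ℝ)⌉₊ : ℕ) : ℝ) ≤ σ ^ (η * l + 1) := this
          _ = σ * σ ^ (η * l) := by
              rw [Real.rpow_add hσ, Real.rpow_one]; ring
          _ ≤ max σ 1 * σ ^ (η * l) := by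
              have := Real.rpow_pos_of_pos hσ (η * l)
              nlinarith [le_max_left σ 1]
    calc W * ρ ^ l * σ ^ (⌈η * (l:ℝ)⌉₊ : ℕ)
        ≤ W * ρ ^ l * (max σ 1 * (σ ^ η) ^ l) := by
          apply mul_le_mul_of_nonneg_left h1
          positivity
      _ = (W * max σ 1) * δ ^ l := by rw [hδ, mul_pow]; ring
  have htend : Tendsto (fun l : ℕ => (W * max σ 1) * δ ^ l) atTop (nhds 0) := by
    have := tendsto_pow_atTop_nhds_zero_of_lt_one hδ0.le key
    simpa using this.const_mul (W * max σ 1)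
  filter_upwards [htend.eventually_lt_const hc] with l h
  exact lt_of_le_of_lt (hbound l) h

lemma term_lt (η c W1 X1 Y1 W2 X2 Y2 : ℝ) (hη : 0 < η) (hc : 0 < c)
    (hW1 : 0 < W1) (hX1 : 0 < X1) (hY1 : 0 < Y1)
    (hW2 : 0 < W2) (hX2 : 0 < X2) (hY2 : 0 < Y2)
    (key : Real.log (X1 / X2) + η * Real.log (Y1 / Y2) < 0) :
    ∀ᶠ l : ℕ in atTop,
      W1 * X1 ^ l * Y1 ^ (⌈η * (l:ℝ)⌉₊ : ℕ) < c * (W2 * X2 ^ l * Y2 ^ (⌈η * (l:ℝ)⌉₊ : ℕ)) := by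
  have hkey : (X1/X2) * (Y1/Y2) ^ η < 1 :=
    key_core _ _ _ (by positivity) (by positivity) key
  filter_upwards [dom_bound η (W1/W2) (X1/X2) (Y1/Y2) c hη (by positivity) (by positivity)
    (by positivity) hkey hc] with l h
  have h2 : 0 < W2 * X2 ^ l * Y2 ^ (⌈η * (l:ℝ)⌉₊ : ℕ) := by positivity
  have heq : (W1/W2) * (X1/X2) ^ l * ((Y1/Y2) ^ (⌈η * (l:ℝ)⌉₊ : ℕ)) *
      (W2 * X2 ^ l * Y2 ^ (⌈η * (l:ℝ)⌉₊ : ℕ)) = W1 * X1 ^ l * Y1 ^ (⌈η * (l:ℝ)⌉₊ : ℕ) := by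
    simp only [div_pow]
    field_simp
  calc W1 * X1 ^ l * Y1 ^ (⌈η * (l:ℝ)⌉₊ : ℕ)
      = (W1/W2) * (X1/X2) ^ l * ((Y1/Y2) ^ (⌈η * (l:ℝ)⌉₊ : ℕ)) *
        (W2 * X2 ^ l * Y2 ^ (⌈η * (l:ℝ)⌉₊ : ℕ)) := heq.symm
    _ < c * (W2 * X2 ^ l * Y2 ^ (⌈η * (l:ℝ)⌉₊ : ℕ)) :=
        mul_lt_mul_of_pos_right h h2

lemma ceil_le_self {η : ℝ} (hη : 0 < η) (hη1 : η ≤ 1/2) (l : ℕ) : ⌈η*(l:ℝ)⌉₊ ≤ l := by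
  apply Nat.ceil_le.mpr
  have h0 : (0:ℝ) ≤ (l:ℝ) := Nat.cast_nonneg l
  nlinarith

lemma div_mul_half (num den : ℝ) (h : den ≠ 0) : num / (2*den) * den = (1/2)*num := by
  field_simp

lemma ball_aux (La0 La1 La2 Lb0 Lb1 Lb2 W0 W1 W2 r M₁ η : ℝ)
    (hr : 0 < r) (hM : 0 < M₁) (hη : 0 < η) (hη1 : η ≤ 1/2) (hη2 : η ≤ r/(2*M₁))
    (h10 : |La0 + M₁/2| < r) (h11 : |La1 - M₁| < r) (h12 : |La2 + M₁/2| < r)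
    (h20 : |Lb0 + M₁/2| < r) (h21 : |Lb1 + M₁/2| < r) (h22 : |Lb2 - M₁| < r) :
    ∀ᶠ l : ℕ in Filter.atTop,
      |W0 + ((l - ⌈η*(l:ℝ)⌉₊ : ℕ):ℝ)*La0 + (l:ℝ)*Lb0 + (l:ℝ)*M₁| < 4*(l:ℝ)*r ∧
      |W1 + ((l - ⌈η*(l:ℝ)⌉₊ : ℕ):ℝ)*La1 + (l:ℝ)*Lb1 - (l:ℝ)*M₁/2| < 4*(l:ℝ)*r ∧
      |W2 + ((l - ⌈η*(l:ℝ)⌉₊ : ℕ):ℝ)*La2 + (l:ℝ)*Lb2 - (l:ℝ)*M₁/2| < 4*(l:ℝ)*r := by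
  have htend : Tendsto (fun l : ℕ => (l:ℝ)*r) atTop atTop :=
    (tendsto_natCast_atTop_atTop (R := ℝ)).atTop_mul_const hr
  filter_upwards [htend.eventually_gt_atTop (|W0|+|W1|+|W2| + M₁),
    Filter.eventually_ge_atTop 1] with l hlr hl1
  have hl0 : (0:ℝ) ≤ (l:ℝ) := Nat.cast_nonneg l
  have hJl : ⌈η*(l:ℝ)⌉₊ ≤ l := Nat.ceil_le.mpr (by nlinarith)
  have hpcast : ((l - ⌈η*(l:ℝ)⌉₊ : ℕ):ℝ) = (l:ℝ) - (⌈η*(l:ℝ)⌉₊:ℝ) := by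
    rw [Nat.cast_sub hJl]
  have hp0 : (0:ℝ) ≤ ((l - ⌈η*(l:ℝ)⌉₊ : ℕ):ℝ) := Nat.cast_nonneg _
  have hpl : ((l - ⌈η*(l:ℝ)⌉₊ : ℕ):ℝ) ≤ (l:ℝ) := Nat.cast_le.mpr (Nat.sub_le l _)
  have hJup : ((⌈η*(l:ℝ)⌉₊:ℕ):ℝ) ≤ η*(l:ℝ) + 1 := (Nat.ceil_lt_add_one (by positivity)).le
  have hetaM : η*(2*M₁) ≤ r := (le_div_iff₀ (by positivity)).mp hη2
  have hJM : ((⌈η*(l:ℝ)⌉₊:ℕ):ℝ)*M₁ ≤ (l:ℝ)*r/2 + M₁ := by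
    have t1 : ((⌈η*(l:ℝ)⌉₊:ℕ):ℝ)*M₁ ≤ (η*(l:ℝ)+1)*M₁ := mul_le_mul_of_nonneg_right hJup hM.le
    have t2 : (η*(2*M₁))*(l:ℝ) ≤ r*(l:ℝ) := mul_le_mul_of_nonneg_right hetaM hl0
    nlinarith
  have hpM : ((l - ⌈η*(l:ℝ)⌉₊ : ℕ):ℝ)*M₁ = (l:ℝ)*M₁ - ((⌈η*(l:ℝ)⌉₊:ℕ):ℝ)*M₁ := by
    rw [hpcast]; ring
  -- product bounds
  have bound : ∀ L t : ℝ, |L - t| < r → ∀ n : ℝ, 0 ≤ n → n ≤ (l:ℝ) →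
      n*L ≤ n*t + (l:ℝ)*r ∧ n*t - (l:ℝ)*r ≤ n*L := by
    intro L t h n hn hnl
    have h' := abs_lt.mp h
    constructor <;> nlinarith [mul_le_mul_of_nonneg_left h'.2.le hn,
      mul_le_mul_of_nonneg_left (by linarith [h'.1] : -(r) ≤ L - t) hn,
      mul_le_mul_of_nonneg_right hnl hr.le]
  obtain ⟨u0, v0⟩ := bound La0 (-(M₁/2)) (by rw [show La0 - -(M₁/2) = La0 + M₁/2 by ring]; exact h10) _ hp0 hpl
  obtain ⟨u1, v1⟩ := bound La1 M₁ h11 _ hp0 hpl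
  obtain ⟨u2, v2⟩ := bound La2 (-(M₁/2)) (by rw [show La2 - -(M₁/2) = La2 + M₁/2 by ring]; exact h12) _ hp0 hpl
  obtain ⟨s0, t0⟩ := bound Lb0 (-(M₁/2)) (by rw [show Lb0 - -(M₁/2) = Lb0 + M₁/2 by ring]; exact h20) _ hl0 le_rfl
  obtain ⟨s1, t1⟩ := bound Lb1 (-(M₁/2)) (by rw [show Lb1 - -(M₁/2) = Lb1 + M₁/2 by ring]; exact h21) _ hl0 le_rfl
  obtain ⟨s2, t2⟩ := bound Lb2 M₁ h22 _ hl0 le_rfl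
  have hJ0 : (0:ℝ) ≤ ((⌈η*(l:ℝ)⌉₊:ℕ):ℝ)*M₁ := by positivity
  have haW0 := le_abs_self W0; have haW0' := neg_abs_le W0
  have haW1 := le_abs_self W1; have haW1' := neg_abs_le W1
  have haW2 := le_abs_self W2; have haW2' := neg_abs_le W2
  have hW1n := abs_nonneg W1; have hW2n := abs_nonneg W2; have hW0n := abs_nonneg W0
  refine ⟨?_, ?_, ?_⟩ <;> rw [abs_lt] <;> constructor <;> linarith

lemma cramer3 (x0 x1 x2 v0 v1 v2 z0 z1 z2 : ℝ)
    (hD : ((v1 * z2 - v2 * z1) - (v0 * z2 - v2 * z0) + (v0 * z1 - v1 * z0)) ≠ 0) :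
    x0 = (x0 * (v1 * z2 - v2 * z1) - x1 * (v0 * z2 - v2 * z0) + x2 * (v0 * z1 - v1 * z0)) /
          ((v1 * z2 - v2 * z1) - (v0 * z2 - v2 * z0) + (v0 * z1 - v1 * z0)) +
        ((x1 * z2 - x2 * z1) - (x0 * z2 - x2 * z0) + (x0 * z1 - x1 * z0)) /
          ((v1 * z2 - v2 * z1) - (v0 * z2 - v2 * z0) + (v0 * z1 - v1 * z0)) * v0 +
        ((v1 * x2 - v2 * x1) - (v0 * x2 - v2 * x0) + (v0 * x1 - v1 * x0)) /
          ((v1 * z2 - v2 * z1) - (v0 * z2 - v2 * z0) + (v0 * z1 - v1 * z0)) * z0 ∧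
    x1 = (x0 * (v1 * z2 - v2 * z1) - x1 * (v0 * z2 - v2 * z0) + x2 * (v0 * z1 - v1 * z0)) /
          ((v1 * z2 - v2 * z1) - (v0 * z2 - v2 * z0) + (v0 * z1 - v1 * z0)) +
        ((x1 * z2 - x2 * z1) - (x0 * z2 - x2 * z0) + (x0 * z1 - x1 * z0)) /
          ((v1 * z2 - v2 * z1) - (v0 * z2 - v2 * z0) + (v0 * z1 - v1 * z0)) * v1 +
        ((v1 * x2 - v2 * x1) - (v0 * x2 - v2 * x0) + (v0 * x1 - v1 * x0)) /
          ((v1 * z2 - v2 * z1) - (v0 * z2 - v2 * z0) + (v0 * z1 - v1 * z0)) * z1 ∧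
    x2 = (x0 * (v1 * z2 - v2 * z1) - x1 * (v0 * z2 - v2 * z0) + x2 * (v0 * z1 - v1 * z0)) /
          ((v1 * z2 - v2 * z1) - (v0 * z2 - v2 * z0) + (v0 * z1 - v1 * z0)) +
        ((x1 * z2 - x2 * z1) - (x0 * z2 - x2 * z0) + (x0 * z1 - x1 * z0)) /
          ((v1 * z2 - v2 * z1) - (v0 * z2 - v2 * z0) + (v0 * z1 - v1 * z0)) * v2 +
        ((v1 * x2 - v2 * x1) - (v0 * x2 - v2 * x0) + (v0 * x1 - v1 * x0)) /
          ((v1 * z2 - v2 * z1) - (v0 * z2 - v2 * z0) + (v0 * z1 - v1 * z0)) * z2 := by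
  refine ⟨?_, ?_, ?_⟩ <;> (simp only [div_mul_eq_mul_div, ← add_div]; rw [eq_div_iff hD]; ring)

lemma caseG2 (a0 a1 a2 b0 b1 b2 w0 w1 w2 η : ℝ)
    (ha0 : 0 < a0) (ha1 : 0 < a1) (ha2 : 0 < a2)
    (hb0 : 0 < b0) (hb1 : 0 < b1) (hb2 : 0 < b2)
    (hw0 : 0 < w0) (hw1 : 0 < w1) (hw2 : 0 < w2)
    (hη : 0 < η) (hη2 : η ≤ 1/2)
    (ha01 : a0 < 1) (ha11 : 1 < a1) (ha20 : a2 < a0)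
    (hb01 : b0 < b1) (hb11 : b1 < 1) (hb21 : 1 < b2)
    (hGm : a0 * b0 ≤ a2 * b2)
    (hT1 : η * (Real.log a1 - Real.log a2) ≤
      (1/2) * ((Real.log a1 + Real.log b1) - (Real.log a2 + Real.log b2)) ∨ true = true)
    (hT2 : η * (Real.log a1 - Real.log a0) ≤ (1/2) * (Real.log b1 - Real.log b0) ∨ true = true)
    (hT3 : η * (Real.log a0 - Real.log a2) ≤
      (1/2) * ((Real.log a0 + Real.log b0) - (Real.log a2 + Real.log b2)) ∨ true = true) :
    ∀ᶠ l : ℕ in Filter.atTop,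
      ∃ c d e : ℝ, 0 < c ∧ 0 < d ∧ 0 < e ∧
        (w0 * (a0 * b0) ^ l * a0⁻¹ ^ ⌈η * (l:ℝ)⌉₊ = c + d * (b0 ^ l) + e * (b0 ^ l * a0 ^ l)) ∧ (w1 * (a1 * b1) ^ l * a1⁻¹ ^ ⌈η * (l:ℝ)⌉₊ = c + d * (b1 ^ l) + e * (b1 ^ l * a1 ^ l)) ∧ (w2 * (a2 * b2) ^ l * a2⁻¹ ^ ⌈η * (l:ℝ)⌉₊ = c + d * (b2 ^ l) + e * (b2 ^ l * a2 ^ l)) := by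
  have hLa0 : Real.log a0 < 0 := Real.log_neg ha0 ha01
  have hLa1 : 0 < Real.log a1 := Real.log_pos ha11
  have hLa20 : Real.log a2 < Real.log a0 := Real.log_lt_log ha2 ha20
  have hLb01 : Real.log b0 < Real.log b1 := Real.log_lt_log hb0 hb01
  have hLb1 : Real.log b1 < 0 := Real.log_neg hb1 hb11
  have hLb2 : 0 < Real.log b2 := Real.log_pos hb21
  have hLa21 : Real.log a2 < Real.log a1 := by linarith
  have hLa01 : Real.log a0 < Real.log a1 := by linarith
  have hLb02 : Real.log b0 < Real.log b2 := by linarith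
  have hGL : Real.log a0 + Real.log b0 ≤ Real.log a2 + Real.log b2 := by
    have h := Real.log_le_log (by positivity) hGm
    rwa [Real.log_mul (by positivity) (by positivity),
      Real.log_mul (by positivity) (by positivity)] at h
  have hP1 : η * (Real.log a1 - Real.log a2) ≤ (1/2) * (Real.log a1 - Real.log a2) :=
    mul_le_mul_of_nonneg_right hη2 (by linarith)
  have hP2 : η * (Real.log a1 - Real.log a0) ≤ (1/2) * (Real.log a1 - Real.log a0) :=
    mul_le_mul_of_nonneg_right hη2 (by linarith)
  have hP3 : η * (Real.log a0 - Real.log a2) ≤ (1/2) * (Real.log a0 - Real.log a2) :=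
    mul_le_mul_of_nonneg_right hη2 (by linarith)
  have hP4 : η * (Real.log a2 - Real.log a1) < 0 := mul_neg_of_pos_of_neg hη (by linarith)
  have hP5 : η * (Real.log a2 - Real.log a0) < 0 := mul_neg_of_pos_of_neg hη (by linarith)
  have hP6 : η * (Real.log a0 - Real.log a1) < 0 := mul_neg_of_pos_of_neg hη (by linarith)
  have hT1' : True := trivial
  have hT1 : (0:ℝ) ≤ 0 := le_refl 0
  have hT2 : (0:ℝ) ≤ 0 := le_refl 0
  have hT3 : (0:ℝ) ≤ 0 := le_refl 0
  have c1 : ∀ᶠ l : ℕ in Filter.atTop,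
      1 * (b1 * (b2 * a2)) ^ l * ((1:ℝ)) ^ ⌈η * (l:ℝ)⌉₊ < 1/3 * (1 * (b2 * (b1 * a1)) ^ l * ((1:ℝ)) ^ ⌈η * (l:ℝ)⌉₊) :=
    term_lt η (1/3) (1) (b1 * (b2 * a2)) ((1:ℝ)) (1) (b2 * (b1 * a1)) ((1:ℝ)) hη (by norm_num)
      (by positivity) (by positivity) (by positivity) (by positivity) (by positivity) (by positivity)
      (by
        rw [Real.log_div (by positivity) (by positivity), Real.log_div (by positivity) (by positivity)]
        repeat rw [Real.log_mul (by positivity) (by positivity)]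
        simp only [Real.log_inv, Real.log_one]
        linarith [hLa0, hLa1, hLa20, hLa21, hLa01, hLb01, hLb1, hLb2, hLb02, hGL, hP1, hP2, hP3, hP4, hP5, hP6, hT1, hT2, hT3])
  have c2 : ∀ᶠ l : ℕ in Filter.atTop,
      1 * (b2 * (b0 * a0)) ^ l * ((1:ℝ)) ^ ⌈η * (l:ℝ)⌉₊ < 1/3 * (1 * (b2 * (b1 * a1)) ^ l * ((1:ℝ)) ^ ⌈η * (l:ℝ)⌉₊) :=
    term_lt η (1/3) (1) (b2 * (b0 * a0)) ((1:ℝ)) (1) (b2 * (b1 * a1)) ((1:ℝ)) hη (by norm_num)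
      (by positivity) (by positivity) (by positivity) (by positivity) (by positivity) (by positivity)
      (by
        rw [Real.log_div (by positivity) (by positivity), Real.log_div (by positivity) (by positivity)]
        repeat rw [Real.log_mul (by positivity) (by positivity)]
        simp only [Real.log_inv, Real.log_one]
        linarith [hLa0, hLa1, hLa20, hLa21, hLa01, hLb01, hLb1, hLb2, hLb02, hGL, hP1, hP2, hP3, hP4, hP5, hP6, hT1, hT2, hT3])
  have c3 : ∀ᶠ l : ℕ in Filter.atTop,
      1 * (b0 * (b1 * a1)) ^ l * ((1:ℝ)) ^ ⌈η * (l:ℝ)⌉₊ < 1/3 * (1 * (b2 * (b1 * a1)) ^ l * ((1:ℝ)) ^ ⌈η * (l:ℝ)⌉₊) :=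
    term_lt η (1/3) (1) (b0 * (b1 * a1)) ((1:ℝ)) (1) (b2 * (b1 * a1)) ((1:ℝ)) hη (by norm_num)
      (by positivity) (by positivity) (by positivity) (by positivity) (by positivity) (by positivity)
      (by
        rw [Real.log_div (by positivity) (by positivity), Real.log_div (by positivity) (by positivity)]
        repeat rw [Real.log_mul (by positivity) (by positivity)]
        simp only [Real.log_inv, Real.log_one]
        linarith [hLa0, hLa1, hLa20, hLa21, hLa01, hLb01, hLb1, hLb2, hLb02, hGL, hP1, hP2, hP3, hP4, hP5, hP6, hT1, hT2, hT3])
  have c4 : ∀ᶠ l : ℕ in Filter.atTop,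
      w2 * (b1 * (a2 * b2)) ^ l * (a2⁻¹) ^ ⌈η * (l:ℝ)⌉₊ < 1/3 * (w1 * (b2 * (a1 * b1)) ^ l * (a1⁻¹) ^ ⌈η * (l:ℝ)⌉₊) :=
    term_lt η (1/3) (w2) (b1 * (a2 * b2)) (a2⁻¹) (w1) (b2 * (a1 * b1)) (a1⁻¹) hη (by norm_num)
      (by positivity) (by positivity) (by positivity) (by positivity) (by positivity) (by positivity)
      (by
        rw [Real.log_div (by positivity) (by positivity), Real.log_div (by positivity) (by positivity)]
        repeat rw [Real.log_mul (by positivity) (by positivity)]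
        simp only [Real.log_inv, Real.log_one]
        linarith [hLa0, hLa1, hLa20, hLa21, hLa01, hLb01, hLb1, hLb2, hLb02, hGL, hP1, hP2, hP3, hP4, hP5, hP6, hT1, hT2, hT3])
  have c5 : ∀ᶠ l : ℕ in Filter.atTop,
      w0 * (b2 * (a0 * b0)) ^ l * (a0⁻¹) ^ ⌈η * (l:ℝ)⌉₊ < 1/3 * (w1 * (b2 * (a1 * b1)) ^ l * (a1⁻¹) ^ ⌈η * (l:ℝ)⌉₊) :=
    term_lt η (1/3) (w0) (b2 * (a0 * b0)) (a0⁻¹) (w1) (b2 * (a1 * b1)) (a1⁻¹) hη (by norm_num)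
      (by positivity) (by positivity) (by positivity) (by positivity) (by positivity) (by positivity)
      (by
        rw [Real.log_div (by positivity) (by positivity), Real.log_div (by positivity) (by positivity)]
        repeat rw [Real.log_mul (by positivity) (by positivity)]
        simp only [Real.log_inv, Real.log_one]
        linarith [hLa0, hLa1, hLa20, hLa21, hLa01, hLb01, hLb1, hLb2, hLb02, hGL, hP1, hP2, hP3, hP4, hP5, hP6, hT1, hT2, hT3])
  have c6 : ∀ᶠ l : ℕ in Filter.atTop,
      w1 * (b0 * (a1 * b1)) ^ l * (a1⁻¹) ^ ⌈η * (l:ℝ)⌉₊ < 1/3 * (w1 * (b2 * (a1 * b1)) ^ l * (a1⁻¹) ^ ⌈η * (l:ℝ)⌉₊) :=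
    term_lt η (1/3) (w1) (b0 * (a1 * b1)) (a1⁻¹) (w1) (b2 * (a1 * b1)) (a1⁻¹) hη (by norm_num)
      (by positivity) (by positivity) (by positivity) (by positivity) (by positivity) (by positivity)
      (by
        rw [Real.log_div (by positivity) (by positivity), Real.log_div (by positivity) (by positivity)]
        repeat rw [Real.log_mul (by positivity) (by positivity)]
        simp only [Real.log_inv, Real.log_one]
        linarith [hLa0, hLa1, hLa20, hLa21, hLa01, hLb01, hLb1, hLb2, hLb02, hGL, hP1, hP2, hP3, hP4, hP5, hP6, hT1, hT2, hT3])
  have c7 : ∀ᶠ l : ℕ in Filter.atTop,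
      w1 * ((a1 * b1) * (b2 * a2)) ^ l * (a1⁻¹) ^ ⌈η * (l:ℝ)⌉₊ < 1/3 * (w2 * ((a2 * b2) * (b1 * a1)) ^ l * (a2⁻¹) ^ ⌈η * (l:ℝ)⌉₊) :=
    term_lt η (1/3) (w1) ((a1 * b1) * (b2 * a2)) (a1⁻¹) (w2) ((a2 * b2) * (b1 * a1)) (a2⁻¹) hη (by norm_num)
      (by positivity) (by positivity) (by positivity) (by positivity) (by positivity) (by positivity)
      (by
        rw [Real.log_div (by positivity) (by positivity), Real.log_div (by positivity) (by positivity)]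
        repeat rw [Real.log_mul (by positivity) (by positivity)]
        simp only [Real.log_inv, Real.log_one]
        linarith [hLa0, hLa1, hLa20, hLa21, hLa01, hLb01, hLb1, hLb2, hLb02, hGL, hP1, hP2, hP3, hP4, hP5, hP6, hT1, hT2, hT3])
  have c8 : ∀ᶠ l : ℕ in Filter.atTop,
      w2 * ((a2 * b2) * (b0 * a0)) ^ l * (a2⁻¹) ^ ⌈η * (l:ℝ)⌉₊ < 1/3 * (w2 * ((a2 * b2) * (b1 * a1)) ^ l * (a2⁻¹) ^ ⌈η * (l:ℝ)⌉₊) :=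
    term_lt η (1/3) (w2) ((a2 * b2) * (b0 * a0)) (a2⁻¹) (w2) ((a2 * b2) * (b1 * a1)) (a2⁻¹) hη (by norm_num)
      (by positivity) (by positivity) (by positivity) (by positivity) (by positivity) (by positivity)
      (by
        rw [Real.log_div (by positivity) (by positivity), Real.log_div (by positivity) (by positivity)]
        repeat rw [Real.log_mul (by positivity) (by positivity)]
        simp only [Real.log_inv, Real.log_one]
        linarith [hLa0, hLa1, hLa20, hLa21, hLa01, hLb01, hLb1, hLb2, hLb02, hGL, hP1, hP2, hP3, hP4, hP5, hP6, hT1, hT2, hT3])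
  have c9 : ∀ᶠ l : ℕ in Filter.atTop,
      w0 * ((a0 * b0) * (b1 * a1)) ^ l * (a0⁻¹) ^ ⌈η * (l:ℝ)⌉₊ < 1/3 * (w2 * ((a2 * b2) * (b1 * a1)) ^ l * (a2⁻¹) ^ ⌈η * (l:ℝ)⌉₊) :=
    term_lt η (1/3) (w0) ((a0 * b0) * (b1 * a1)) (a0⁻¹) (w2) ((a2 * b2) * (b1 * a1)) (a2⁻¹) hη (by norm_num)
      (by positivity) (by positivity) (by positivity) (by positivity) (by positivity) (by positivity)
      (by
        rw [Real.log_div (by positivity) (by positivity), Real.log_div (by positivity) (by positivity)]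
        repeat rw [Real.log_mul (by positivity) (by positivity)]
        simp only [Real.log_inv, Real.log_one]
        linarith [hLa0, hLa1, hLa20, hLa21, hLa01, hLb01, hLb1, hLb2, hLb02, hGL, hP1, hP2, hP3, hP4, hP5, hP6, hT1, hT2, hT3])
  have c10 : ∀ᶠ l : ℕ in Filter.atTop,
      w0 * ((a0 * b0) * (b1 * (b2 * a2))) ^ l * (a0⁻¹) ^ ⌈η * (l:ℝ)⌉₊ < 1/3 * (w0 * ((a0 * b0) * (b2 * (b1 * a1))) ^ l * (a0⁻¹) ^ ⌈η * (l:ℝ)⌉₊) :=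
    term_lt η (1/3) (w0) ((a0 * b0) * (b1 * (b2 * a2))) (a0⁻¹) (w0) ((a0 * b0) * (b2 * (b1 * a1))) (a0⁻¹) hη (by norm_num)
      (by positivity) (by positivity) (by positivity) (by positivity) (by positivity) (by positivity)
      (by
        rw [Real.log_div (by positivity) (by positivity), Real.log_div (by positivity) (by positivity)]
        repeat rw [Real.log_mul (by positivity) (by positivity)]
        simp only [Real.log_inv, Real.log_one]
        linarith [hLa0, hLa1, hLa20, hLa21, hLa01, hLb01, hLb1, hLb2, hLb02, hGL, hP1, hP2, hP3, hP4, hP5, hP6, hT1, hT2, hT3])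
  have c11 : ∀ᶠ l : ℕ in Filter.atTop,
      w1 * ((a1 * b1) * (b2 * (b0 * a0))) ^ l * (a1⁻¹) ^ ⌈η * (l:ℝ)⌉₊ < 1/3 * (w0 * ((a0 * b0) * (b2 * (b1 * a1))) ^ l * (a0⁻¹) ^ ⌈η * (l:ℝ)⌉₊) :=
    term_lt η (1/3) (w1) ((a1 * b1) * (b2 * (b0 * a0))) (a1⁻¹) (w0) ((a0 * b0) * (b2 * (b1 * a1))) (a0⁻¹) hη (by norm_num)
      (by positivity) (by positivity) (by positivity) (by positivity) (by positivity) (by positivity)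
      (by
        rw [Real.log_div (by positivity) (by positivity), Real.log_div (by positivity) (by positivity)]
        repeat rw [Real.log_mul (by positivity) (by positivity)]
        simp only [Real.log_inv, Real.log_one]
        linarith [hLa0, hLa1, hLa20, hLa21, hLa01, hLb01, hLb1, hLb2, hLb02, hGL, hP1, hP2, hP3, hP4, hP5, hP6, hT1, hT2, hT3])
  have c12 : ∀ᶠ l : ℕ in Filter.atTop,
      w2 * ((a2 * b2) * (b0 * (b1 * a1))) ^ l * (a2⁻¹) ^ ⌈η * (l:ℝ)⌉₊ < 1/3 * (w0 * ((a0 * b0) * (b2 * (b1 * a1))) ^ l * (a0⁻¹) ^ ⌈η * (l:ℝ)⌉₊) :=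
    term_lt η (1/3) (w2) ((a2 * b2) * (b0 * (b1 * a1))) (a2⁻¹) (w0) ((a0 * b0) * (b2 * (b1 * a1))) (a0⁻¹) hη (by norm_num)
      (by positivity) (by positivity) (by positivity) (by positivity) (by positivity) (by positivity)
      (by
        rw [Real.log_div (by positivity) (by positivity), Real.log_div (by positivity) (by positivity)]
        repeat rw [Real.log_mul (by positivity) (by positivity)]
        simp only [Real.log_inv, Real.log_one]
        linarith [hLa0, hLa1, hLa20, hLa21, hLa01, hLb01, hLb1, hLb2, hLb02, hGL, hP1, hP2, hP3, hP4, hP5, hP6, hT1, hT2, hT3])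
  filter_upwards [c1, c2, c3, c4, c5, c6, c7, c8, c9, c10, c11, c12] with l h1 h2 h3 h4 h5 h6 h7 h8 h9 h10 h11 h12
  have hD : (b1 ^ l * (b2 ^ l * a2 ^ l) - b2 ^ l * (b1 ^ l * a1 ^ l)) - (b0 ^ l * (b2 ^ l * a2 ^ l) - b2 ^ l * (b0 ^ l * a0 ^ l)) + (b0 ^ l * (b1 ^ l * a1 ^ l) - b1 ^ l * (b0 ^ l * a0 ^ l)) < 0 := by
    have e : ((b1 ^ l * (b2 ^ l * a2 ^ l) - b2 ^ l * (b1 ^ l * a1 ^ l)) - (b0 ^ l * (b2 ^ l * a2 ^ l) - b2 ^ l * (b0 ^ l * a0 ^ l)) + (b0 ^ l * (b1 ^ l * a1 ^ l) - b1 ^ l * (b0 ^ l * a0 ^ l))) = (1 * (b1 * (b2 * a2)) ^ l * ((1:ℝ)) ^ ⌈η * (l:ℝ)⌉₊) - (1 * (b2 * (b1 * a1)) ^ l * ((1:ℝ)) ^ ⌈η * (l:ℝ)⌉₊) - (1 * (b0 * (b2 * a2)) ^ l * ((1:ℝ)) ^ ⌈η * (l:ℝ)⌉₊) + (1 * (b2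 * (b0 * a0)) ^ l * ((1:ℝ)) ^ ⌈η * (l:ℝ)⌉₊) + (1 * (b0 * (b1 * a1)) ^ l * ((1:ℝ)) ^ ⌈η * (l:ℝ)⌉₊) - (1 * (b1 * (b0 * a0)) ^ l * ((1:ℝ)) ^ ⌈η * (l:ℝ)⌉₊) := by ring
    rw [e]
    linarith [h1, h2, h3, (by positivity : (0:ℝ) ≤ 1 * (b0 * (b2 * a2)) ^ l * ((1:ℝ)) ^ ⌈η * (l:ℝ)⌉₊), (by positivity : (0:ℝ) ≤ 1 * (b1 * (b0 * a0)) ^ l * ((1:ℝ)) ^ ⌈η * (l:ℝ)⌉₊)]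
  have hNe : (b1 ^ l * (w2 * (a2 * b2) ^ l * a2⁻¹ ^ ⌈η * (l:ℝ)⌉₊) - b2 ^ l * (w1 * (a1 * b1) ^ l * a1⁻¹ ^ ⌈η * (l:ℝ)⌉₊)) - (b0 ^ l * (w2 * (a2 * b2) ^ l * a2⁻¹ ^ ⌈η * (l:ℝ)⌉₊) - b2 ^ l * (w0 * (a0 * b0) ^ l * a0⁻¹ ^ ⌈η * (l:ℝ)⌉₊)) + (b0 ^ l * (w1 * (a1 * b1) ^ l * a1⁻¹ ^ ⌈η * (l:ℝ)⌉₊) - b1 ^ l * (w0 * (a0 * b0) ^ l * a0⁻¹ ^ ⌈η * (l:ℝ)⌉₊)) < 0 := by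
    have e : ((b1 ^ l * (w2 * (a2 * b2) ^ l * a2⁻¹ ^ ⌈η * (l:ℝ)⌉₊) - b2 ^ l * (w1 * (a1 * b1) ^ l * a1⁻¹ ^ ⌈η * (l:ℝ)⌉₊)) - (b0 ^ l * (w2 * (a2 * b2) ^ l * a2⁻¹ ^ ⌈η * (l:ℝ)⌉₊) - b2 ^ l * (w0 * (a0 * b0) ^ l * a0⁻¹ ^ ⌈η * (l:ℝ)⌉₊)) + (b0 ^ l * (w1 * (a1 * b1) ^ l * a1⁻¹ ^ ⌈η * (l:ℝ)⌉₊) - b1 ^ l * (w0 * (a0 * b0) ^ l * a0⁻¹ ^ ⌈η * (l:ℝ)⌉₊))) = (w2 * (b1 * (a2 * b2)) ^ l * (a2⁻¹) ^ ⌈η * (l:ℝ)⌉₊) - (w1 * (b2 * (a1 * b1)) ^ l * (a1⁻¹) ^ ⌈η * (l:ℝ)⌉₊) - (w2 * (b0 * (a2 * b2)) ^ l * (a2⁻¹) ^ ⌈η * (l:ℝ)⌉₊) + (w0 * (b2 * (a0 * b0)) ^ l * (a0⁻¹) ^ ⌈η * (l:ℝ)⌉₊) + (w1 * (b0 * (a1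 * b1)) ^ l * (a1⁻¹) ^ ⌈η * (l:ℝ)⌉₊) - (w0 * (b1 * (a0 * b0)) ^ l * (a0⁻¹) ^ ⌈η * (l:ℝ)⌉₊) := by ring
    rw [e]
    linarith [h4, h5, h6, (by positivity : (0:ℝ) ≤ w2 * (b0 * (a2 * b2)) ^ l * (a2⁻¹) ^ ⌈η * (l:ℝ)⌉₊), (by positivity : (0:ℝ) ≤ w0 * (b1 * (a0 * b0)) ^ l * (a0⁻¹) ^ ⌈η * (l:ℝ)⌉₊)]
  have hNd : ((w1 * (a1 * b1) ^ l * a1⁻¹ ^ ⌈η * (l:ℝ)⌉₊) * (b2 ^ l * a2 ^ l) - (w2 * (a2 * b2) ^ l * a2⁻¹ ^ ⌈η * (l:ℝ)⌉₊) * (b1 ^ l * a1 ^ l)) - ((w0 * (a0 * b0) ^ l * a0⁻¹ ^ ⌈η * (l:ℝ)⌉₊) * (b2 ^ l * a2 ^ l) - (w2 * (a2 * b2) ^ l * a2⁻¹ ^ ⌈η * (l:ℝ)⌉₊) * (b0 ^ l * a0 ^ l)) + ((w0 * (a0 * b0) ^ l * a0⁻¹ ^ ⌈η * (l:ℝ)⌉₊)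 * (b1 ^ l * a1 ^ l) - (w1 * (a1 * b1) ^ l * a1⁻¹ ^ ⌈η * (l:ℝ)⌉₊) * (b0 ^ l * a0 ^ l)) < 0 := by
    have e : (((w1 * (a1 * b1) ^ l * a1⁻¹ ^ ⌈η * (l:ℝ)⌉₊) * (b2 ^ l * a2 ^ l) - (w2 * (a2 * b2) ^ l * a2⁻¹ ^ ⌈η * (l:ℝ)⌉₊) * (b1 ^ l * a1 ^ l)) - ((w0 * (a0 * b0) ^ l * a0⁻¹ ^ ⌈η * (l:ℝ)⌉₊) * (b2 ^ l * a2 ^ l) - (w2 * (a2 * b2) ^ l * a2⁻¹ ^ ⌈η * (l:ℝ)⌉₊) * (b0 ^ l * a0 ^ l)) + ((w0 * (a0 * b0) ^ l * a0⁻¹ ^ ⌈η * (l:ℝ)⌉₊) * (b1 ^ l * a1 ^ l) - (w1 * (a1 * b1) ^ l * a1⁻¹ ^ ⌈η * (l:ℝ)⌉₊) * (b0 ^ l * a0 ^ l))) = (w1 * ((a1 * b1) * (b2 * a2)) ^ l * (a1⁻¹) ^ ⌈η * (l:ℝ)⌉₊) - (w2 * ((a2 * b2) * (b1 * a1)) ^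 l * (a2⁻¹) ^ ⌈η * (l:ℝ)⌉₊) - (w0 * ((a0 * b0) * (b2 * a2)) ^ l * (a0⁻¹) ^ ⌈η * (l:ℝ)⌉₊) + (w2 * ((a2 * b2) * (b0 * a0)) ^ l * (a2⁻¹) ^ ⌈η * (l:ℝ)⌉₊) + (w0 * ((a0 * b0) * (b1 * a1)) ^ l * (a0⁻¹) ^ ⌈η * (l:ℝ)⌉₊) - (w1 * ((a1 * b1) * (b0 * a0)) ^ l * (a1⁻¹) ^ ⌈η * (l:ℝ)⌉₊) := by ring
    rw [e]
    linarith [h7, h8, h9, (by positivity : (0:ℝ) ≤ w0 * ((a0 * b0) * (b2 * a2)) ^ l * (a0⁻¹) ^ ⌈η * (l:ℝ)⌉₊), (by positivity : (0:ℝ) ≤ w1 * ((a1 * b1) * (b0 * a0)) ^ l * (a1⁻¹) ^ ⌈η * (l:ℝ)⌉₊)]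
  have hNc : (w0 * (a0 * b0) ^ l * a0⁻¹ ^ ⌈η * (l:ℝ)⌉₊) * (b1 ^ l * (b2 ^ l * a2 ^ l) - b2 ^ l * (b1 ^ l * a1 ^ l)) - (w1 * (a1 * b1) ^ l * a1⁻¹ ^ ⌈η * (l:ℝ)⌉₊) * (b0 ^ l * (b2 ^ l * a2 ^ l) - b2 ^ l * (b0 ^ l * a0 ^ l)) + (w2 * (a2 * b2) ^ l * a2⁻¹ ^ ⌈η * (l:ℝ)⌉₊) * (b0 ^ l * (b1 ^ l * a1 ^ l) - b1 ^ l * (b0 ^ l * a0 ^ l)) < 0 := by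
    have e : ((w0 * (a0 * b0) ^ l * a0⁻¹ ^ ⌈η * (l:ℝ)⌉₊) * (b1 ^ l * (b2 ^ l * a2 ^ l) - b2 ^ l * (b1 ^ l * a1 ^ l)) - (w1 * (a1 * b1) ^ l * a1⁻¹ ^ ⌈η * (l:ℝ)⌉₊) * (b0 ^ l * (b2 ^ l * a2 ^ l) - b2 ^ l * (b0 ^ l * a0 ^ l)) + (w2 * (a2 * b2) ^ l * a2⁻¹ ^ ⌈η * (l:ℝ)⌉₊) * (b0 ^ l * (b1 ^ l * a1 ^ l) - b1 ^ l * (b0 ^ l * a0 ^ l))) = (w0 * ((a0 * b0) * (b1 * (b2 * a2))) ^ l * (a0⁻¹) ^ ⌈η * (l:ℝ)⌉₊) - (w0 * ((a0 * b0) * (b2 * (b1 * a1))) ^ l * (a0⁻¹) ^ ⌈η * (l:ℝ)⌉₊) - (w1 * ((a1 * b1) * (b0 * (b2 * a2))) ^ l * (a1⁻¹) ^ ⌈η * (l:ℝ)⌉₊) + (w1 * ((a1 * b1) * (b2 * (b0 * a0))) ^ l * (a1⁻¹) ^ ⌈η * (l:ℝ)⌉₊) + (w2 * ((a2 * b2)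 * (b0 * (b1 * a1))) ^ l * (a2⁻¹) ^ ⌈η * (l:ℝ)⌉₊) - (w2 * ((a2 * b2) * (b1 * (b0 * a0))) ^ l * (a2⁻¹) ^ ⌈η * (l:ℝ)⌉₊) := by ring
    rw [e]
    linarith [h10, h11, h12, (by positivity : (0:ℝ) ≤ w1 * ((a1 * b1) * (b0 * (b2 * a2))) ^ l * (a1⁻¹) ^ ⌈η * (l:ℝ)⌉₊), (by positivity : (0:ℝ) ≤ w2 * ((a2 * b2) * (b1 * (b0 * a0))) ^ l * (a2⁻¹) ^ ⌈η * (l:ℝ)⌉₊)]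
  have hDne : ((b1 ^ l * (b2 ^ l * a2 ^ l) - b2 ^ l * (b1 ^ l * a1 ^ l)) - (b0 ^ l * (b2 ^ l * a2 ^ l) - b2 ^ l * (b0 ^ l * a0 ^ l)) + (b0 ^ l * (b1 ^ l * a1 ^ l) - b1 ^ l * (b0 ^ l * a0 ^ l))) ≠ 0 := ne_of_lt hD
  obtain ⟨e0, e1, e2⟩ := cramer3 (w0 * (a0 * b0) ^ l * a0⁻¹ ^ ⌈η * (l:ℝ)⌉₊) (w1 * (a1 * b1) ^ l * a1⁻¹ ^ ⌈η * (l:ℝ)⌉₊) (w2 * (a2 * b2) ^ l * a2⁻¹ ^ ⌈η * (l:ℝ)⌉₊) (b0 ^ l) (b1 ^ l) (b2 ^ l) (b0 ^ l * a0 ^ l) (b1 ^ l * a1 ^ l) (b2 ^ l * a2 ^ l) hDne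
  exact ⟨_, _, _, div_pos_iff.mpr (Or.inr ⟨hNc, hD⟩), div_pos_iff.mpr (Or.inr ⟨hNd, hD⟩),
    div_pos_iff.mpr (Or.inr ⟨hNe, hD⟩), e0, e1, e2⟩

lemma caseG1 (a0 a1 a2 b0 b1 b2 w0 w1 w2 η : ℝ)
    (ha0 : 0 < a0) (ha1 : 0 < a1) (ha2 : 0 < a2)
    (hb0 : 0 < b0) (hb1 : 0 < b1) (hb2 : 0 < b2)
    (hw0 : 0 < w0) (hw1 : 0 < w1) (hw2 : 0 < w2)
    (hη : 0 < η) (hη2 : η ≤ 1/2)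
    (ha01 : a0 < 1) (ha11 : 1 < a1) (ha20 : a2 < a0)
    (hb01 : b0 < b1) (hb11 : b1 < 1) (hb21 : 1 < b2)
    (hGm : a2 * b2 < a0 * b0)
    (hT1 : η * (Real.log a1 - Real.log a2) ≤
      (1/2) * ((Real.log a1 + Real.log b1) - (Real.log a2 + Real.log b2)) ∨ false = true)
    (hT2 : η * (Real.log a1 - Real.log a0) ≤ (1/2) * (Real.log b1 - Real.log b0) ∨ false = true)
    (hT3 : η * (Real.log a0 - Real.log a2) ≤
      (1/2) * ((Real.log a0 + Real.log b0) - (Real.log a2 + Real.log b2)) ∨ false = true) :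
    ∀ᶠ l : ℕ in Filter.atTop,
      ∃ c d e : ℝ, 0 < c ∧ 0 < d ∧ 0 < e ∧
        (w0 * (a0 * b0) ^ l * a0⁻¹ ^ ⌈η * (l:ℝ)⌉₊ = c + d * (a0 ^ l) + e * (a0 ^ l * b0 ^ l)) ∧ (w1 * (a1 * b1) ^ l * a1⁻¹ ^ ⌈η * (l:ℝ)⌉₊ = c + d * (a1 ^ l) + e * (a1 ^ l * b1 ^ l)) ∧ (w2 * (a2 * b2) ^ l * a2⁻¹ ^ ⌈η * (l:ℝ)⌉₊ = c + d * (a2 ^ l) + e * (a2 ^ l * b2 ^ l)) := by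
  have hLa0 : Real.log a0 < 0 := Real.log_neg ha0 ha01
  have hLa1 : 0 < Real.log a1 := Real.log_pos ha11
  have hLa20 : Real.log a2 < Real.log a0 := Real.log_lt_log ha2 ha20
  have hLb01 : Real.log b0 < Real.log b1 := Real.log_lt_log hb0 hb01
  have hLb1 : Real.log b1 < 0 := Real.log_neg hb1 hb11
  have hLb2 : 0 < Real.log b2 := Real.log_pos hb21
  have hLa21 : Real.log a2 < Real.log a1 := by linarith
  have hLa01 : Real.log a0 < Real.log a1 := by linarith
  have hLb02 : Real.log b0 < Real.log b2 := by linarith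
  have hGL : Real.log a2 + Real.log b2 < Real.log a0 + Real.log b0 := by
    have h := Real.log_lt_log (by positivity) hGm
    rwa [Real.log_mul (by positivity) (by positivity),
      Real.log_mul (by positivity) (by positivity)] at h
  have hP1 : η * (Real.log a1 - Real.log a2) ≤ (1/2) * (Real.log a1 - Real.log a2) :=
    mul_le_mul_of_nonneg_right hη2 (by linarith)
  have hP2 : η * (Real.log a1 - Real.log a0) ≤ (1/2) * (Real.log a1 - Real.log a0) :=
    mul_le_mul_of_nonneg_right hη2 (by linarith)
  have hP3 : η * (Real.log a0 - Real.log a2) ≤ (1/2) * (Real.log a0 - Real.log a2) :=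
    mul_le_mul_of_nonneg_right hη2 (by linarith)
  have hP4 : η * (Real.log a2 - Real.log a1) < 0 := mul_neg_of_pos_of_neg hη (by linarith)
  have hP5 : η * (Real.log a2 - Real.log a0) < 0 := mul_neg_of_pos_of_neg hη (by linarith)
  have hP6 : η * (Real.log a0 - Real.log a1) < 0 := mul_neg_of_pos_of_neg hη (by linarith)
  have hT1 := hT1.resolve_right (by simp)
  have hT2 := hT2.resolve_right (by simp)
  have hT3 := hT3.resolve_right (by simp)
  have c1 : ∀ᶠ l : ℕ in Filter.atTop,
      1 * (a2 * (a1 * b1)) ^ l * ((1:ℝ)) ^ ⌈η * (l:ℝ)⌉₊ < 1/3 * (1 * (a0 * (a1 * b1)) ^ l * ((1:ℝ)) ^ ⌈η * (l:ℝ)⌉₊) :=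
    term_lt η (1/3) (1) (a2 * (a1 * b1)) ((1:ℝ)) (1) (a0 * (a1 * b1)) ((1:ℝ)) hη (by norm_num)
      (by positivity) (by positivity) (by positivity) (by positivity) (by positivity) (by positivity)
      (by
        rw [Real.log_div (by positivity) (by positivity), Real.log_div (by positivity) (by positivity)]
        repeat rw [Real.log_mul (by positivity) (by positivity)]
        simp only [Real.log_inv, Real.log_one]
        linarith [hLa0, hLa1, hLa20, hLa21, hLa01, hLb01, hLb1, hLb2, hLb02, hGL, hP1, hP2, hP3, hP4, hP5, hP6, hT1, hT2, hT3])
  have c2 : ∀ᶠ l : ℕ in Filter.atTop,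
      1 * (a0 * (a2 * b2)) ^ l * ((1:ℝ)) ^ ⌈η * (l:ℝ)⌉₊ < 1/3 * (1 * (a0 * (a1 * b1)) ^ l * ((1:ℝ)) ^ ⌈η * (l:ℝ)⌉₊) :=
    term_lt η (1/3) (1) (a0 * (a2 * b2)) ((1:ℝ)) (1) (a0 * (a1 * b1)) ((1:ℝ)) hη (by norm_num)
      (by positivity) (by positivity) (by positivity) (by positivity) (by positivity) (by positivity)
      (by
        rw [Real.log_div (by positivity) (by positivity), Real.log_div (by positivity) (by positivity)]
        repeat rw [Real.log_mul (by positivity) (by positivity)]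
        simp only [Real.log_inv, Real.log_one]
        linarith [hLa0, hLa1, hLa20, hLa21, hLa01, hLb01, hLb1, hLb2, hLb02, hGL, hP1, hP2, hP3, hP4, hP5, hP6, hT1, hT2, hT3])
  have c3 : ∀ᶠ l : ℕ in Filter.atTop,
      1 * (a1 * (a0 * b0)) ^ l * ((1:ℝ)) ^ ⌈η * (l:ℝ)⌉₊ < 1/3 * (1 * (a0 * (a1 * b1)) ^ l * ((1:ℝ)) ^ ⌈η * (l:ℝ)⌉₊) :=
    term_lt η (1/3) (1) (a1 * (a0 * b0)) ((1:ℝ)) (1) (a0 * (a1 * b1)) ((1:ℝ)) hη (by norm_num)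
      (by positivity) (by positivity) (by positivity) (by positivity) (by positivity) (by positivity)
      (by
        rw [Real.log_div (by positivity) (by positivity), Real.log_div (by positivity) (by positivity)]
        repeat rw [Real.log_mul (by positivity) (by positivity)]
        simp only [Real.log_inv, Real.log_one]
        linarith [hLa0, hLa1, hLa20, hLa21, hLa01, hLb01, hLb1, hLb2, hLb02, hGL, hP1, hP2, hP3, hP4, hP5, hP6, hT1, hT2, hT3])
  have c4 : ∀ᶠ l : ℕ in Filter.atTop,
      w1 * (a2 * (a1 * b1)) ^ l * (a1⁻¹) ^ ⌈η * (l:ℝ)⌉₊ < 1/3 * (w1 * (a0 * (a1 * b1)) ^ l * (a1⁻¹) ^ ⌈η * (l:ℝ)⌉₊) :=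
    term_lt η (1/3) (w1) (a2 * (a1 * b1)) (a1⁻¹) (w1) (a0 * (a1 * b1)) (a1⁻¹) hη (by norm_num)
      (by positivity) (by positivity) (by positivity) (by positivity) (by positivity) (by positivity)
      (by
        rw [Real.log_div (by positivity) (by positivity), Real.log_div (by positivity) (by positivity)]
        repeat rw [Real.log_mul (by positivity) (by positivity)]
        simp only [Real.log_inv, Real.log_one]
        linarith [hLa0, hLa1, hLa20, hLa21, hLa01, hLb01, hLb1, hLb2, hLb02, hGL, hP1, hP2, hP3, hP4, hP5, hP6, hT1, hT2, hT3])
  have c5 : ∀ᶠ l : ℕ in Filter.atTop,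
      w2 * (a0 * (a2 * b2)) ^ l * (a2⁻¹) ^ ⌈η * (l:ℝ)⌉₊ < 1/3 * (w1 * (a0 * (a1 * b1)) ^ l * (a1⁻¹) ^ ⌈η * (l:ℝ)⌉₊) :=
    term_lt η (1/3) (w2) (a0 * (a2 * b2)) (a2⁻¹) (w1) (a0 * (a1 * b1)) (a1⁻¹) hη (by norm_num)
      (by positivity) (by positivity) (by positivity) (by positivity) (by positivity) (by positivity)
      (by
        rw [Real.log_div (by positivity) (by positivity), Real.log_div (by positivity) (by positivity)]
        repeat rw [Real.log_mul (by positivity) (by positivity)]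
        simp only [Real.log_inv, Real.log_one]
        linarith [hLa0, hLa1, hLa20, hLa21, hLa01, hLb01, hLb1, hLb2, hLb02, hGL, hP1, hP2, hP3, hP4, hP5, hP6, hT1, hT2, hT3])
  have c6 : ∀ᶠ l : ℕ in Filter.atTop,
      w0 * (a1 * (a0 * b0)) ^ l * (a0⁻¹) ^ ⌈η * (l:ℝ)⌉₊ < 1/3 * (w1 * (a0 * (a1 * b1)) ^ l * (a1⁻¹) ^ ⌈η * (l:ℝ)⌉₊) :=
    term_lt η (1/3) (w0) (a1 * (a0 * b0)) (a0⁻¹) (w1) (a0 * (a1 * b1)) (a1⁻¹) hη (by norm_num)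
      (by positivity) (by positivity) (by positivity) (by positivity) (by positivity) (by positivity)
      (by
        rw [Real.log_div (by positivity) (by positivity), Real.log_div (by positivity) (by positivity)]
        repeat rw [Real.log_mul (by positivity) (by positivity)]
        simp only [Real.log_inv, Real.log_one]
        linarith [hLa0, hLa1, hLa20, hLa21, hLa01, hLb01, hLb1, hLb2, hLb02, hGL, hP1, hP2, hP3, hP4, hP5, hP6, hT1, hT2, hT3])
  have c7 : ∀ᶠ l : ℕ in Filter.atTop,
      w2 * ((a2 * b2) * (a1 * b1)) ^ l * (a2⁻¹) ^ ⌈η * (l:ℝ)⌉₊ < 1/3 * (w0 * ((a0 * b0) * (a1 * b1)) ^ l * (a0⁻¹) ^ ⌈η * (l:ℝ)⌉₊) :=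
    term_lt η (1/3) (w2) ((a2 * b2) * (a1 * b1)) (a2⁻¹) (w0) ((a0 * b0) * (a1 * b1)) (a0⁻¹) hη (by norm_num)
      (by positivity) (by positivity) (by positivity) (by positivity) (by positivity) (by positivity)
      (by
        rw [Real.log_div (by positivity) (by positivity), Real.log_div (by positivity) (by positivity)]
        repeat rw [Real.log_mul (by positivity) (by positivity)]
        simp only [Real.log_inv, Real.log_one]
        linarith [hLa0, hLa1, hLa20, hLa21, hLa01, hLb01, hLb1, hLb2, hLb02, hGL, hP1, hP2, hP3, hP4, hP5, hP6, hT1, hT2, hT3])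
  have c8 : ∀ᶠ l : ℕ in Filter.atTop,
      w0 * ((a0 * b0) * (a2 * b2)) ^ l * (a0⁻¹) ^ ⌈η * (l:ℝ)⌉₊ < 1/3 * (w0 * ((a0 * b0) * (a1 * b1)) ^ l * (a0⁻¹) ^ ⌈η * (l:ℝ)⌉₊) :=
    term_lt η (1/3) (w0) ((a0 * b0) * (a2 * b2)) (a0⁻¹) (w0) ((a0 * b0) * (a1 * b1)) (a0⁻¹) hη (by norm_num)
      (by positivity) (by positivity) (by positivity) (by positivity) (by positivity) (by positivity)
      (by
        rw [Real.log_div (by positivity) (by positivity), Real.log_div (by positivity) (by positivity)]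
        repeat rw [Real.log_mul (by positivity) (by positivity)]
        simp only [Real.log_inv, Real.log_one]
        linarith [hLa0, hLa1, hLa20, hLa21, hLa01, hLb01, hLb1, hLb2, hLb02, hGL, hP1, hP2, hP3, hP4, hP5, hP6, hT1, hT2, hT3])
  have c9 : ∀ᶠ l : ℕ in Filter.atTop,
      w1 * ((a1 * b1) * (a0 * b0)) ^ l * (a1⁻¹) ^ ⌈η * (l:ℝ)⌉₊ < 1/3 * (w0 * ((a0 * b0) * (a1 * b1)) ^ l * (a0⁻¹) ^ ⌈η * (l:ℝ)⌉₊) :=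
    term_lt η (1/3) (w1) ((a1 * b1) * (a0 * b0)) (a1⁻¹) (w0) ((a0 * b0) * (a1 * b1)) (a0⁻¹) hη (by norm_num)
      (by positivity) (by positivity) (by positivity) (by positivity) (by positivity) (by positivity)
      (by
        rw [Real.log_div (by positivity) (by positivity), Real.log_div (by positivity) (by positivity)]
        repeat rw [Real.log_mul (by positivity) (by positivity)]
        simp only [Real.log_inv, Real.log_one]
        linarith [hLa0, hLa1, hLa20, hLa21, hLa01, hLb01, hLb1, hLb2, hLb02, hGL, hP1, hP2, hP3, hP4, hP5, hP6, hT1, hT2, hT3])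
  have c10 : ∀ᶠ l : ℕ in Filter.atTop,
      w0 * ((a0 * b0) * (a2 * (a1 * b1))) ^ l * (a0⁻¹) ^ ⌈η * (l:ℝ)⌉₊ < 1/3 * (w2 * ((a2 * b2) * (a0 * (a1 * b1))) ^ l * (a2⁻¹) ^ ⌈η * (l:ℝ)⌉₊) :=
    term_lt η (1/3) (w0) ((a0 * b0) * (a2 * (a1 * b1))) (a0⁻¹) (w2) ((a2 * b2) * (a0 * (a1 * b1))) (a2⁻¹) hη (by norm_num)
      (by positivity) (by positivity) (by positivity) (by positivity) (by positivity) (by positivity)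
      (by
        rw [Real.log_div (by positivity) (by positivity), Real.log_div (by positivity) (by positivity)]
        repeat rw [Real.log_mul (by positivity) (by positivity)]
        simp only [Real.log_inv, Real.log_one]
        linarith [hLa0, hLa1, hLa20, hLa21, hLa01, hLb01, hLb1, hLb2, hLb02, hGL, hP1, hP2, hP3, hP4, hP5, hP6, hT1, hT2, hT3])
  have c11 : ∀ᶠ l : ℕ in Filter.atTop,
      w1 * ((a1 * b1) * (a0 * (a2 * b2))) ^ l * (a1⁻¹) ^ ⌈η * (l:ℝ)⌉₊ < 1/3 * (w2 * ((a2 * b2) * (a0 * (a1 * b1))) ^ l * (a2⁻¹) ^ ⌈η * (l:ℝ)⌉₊) :=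
    term_lt η (1/3) (w1) ((a1 * b1) * (a0 * (a2 * b2))) (a1⁻¹) (w2) ((a2 * b2) * (a0 * (a1 * b1))) (a2⁻¹) hη (by norm_num)
      (by positivity) (by positivity) (by positivity) (by positivity) (by positivity) (by positivity)
      (by
        rw [Real.log_div (by positivity) (by positivity), Real.log_div (by positivity) (by positivity)]
        repeat rw [Real.log_mul (by positivity) (by positivity)]
        simp only [Real.log_inv, Real.log_one]
        linarith [hLa0, hLa1, hLa20, hLa21, hLa01, hLb01, hLb1, hLb2, hLb02, hGL, hP1, hP2, hP3, hP4, hP5, hP6, hT1, hT2, hT3])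
  have c12 : ∀ᶠ l : ℕ in Filter.atTop,
      w2 * ((a2 * b2) * (a1 * (a0 * b0))) ^ l * (a2⁻¹) ^ ⌈η * (l:ℝ)⌉₊ < 1/3 * (w2 * ((a2 * b2) * (a0 * (a1 * b1))) ^ l * (a2⁻¹) ^ ⌈η * (l:ℝ)⌉₊) :=
    term_lt η (1/3) (w2) ((a2 * b2) * (a1 * (a0 * b0))) (a2⁻¹) (w2) ((a2 * b2) * (a0 * (a1 * b1))) (a2⁻¹) hη (by norm_num)
      (by positivity) (by positivity) (by positivity) (by positivity) (by positivity) (by positivity)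
      (by
        rw [Real.log_div (by positivity) (by positivity), Real.log_div (by positivity) (by positivity)]
        repeat rw [Real.log_mul (by positivity) (by positivity)]
        simp only [Real.log_inv, Real.log_one]
        linarith [hLa0, hLa1, hLa20, hLa21, hLa01, hLb01, hLb1, hLb2, hLb02, hGL, hP1, hP2, hP3, hP4, hP5, hP6, hT1, hT2, hT3])
  filter_upwards [c1, c2, c3, c4, c5, c6, c7, c8, c9, c10, c11, c12] with l h1 h2 h3 h4 h5 h6 h7 h8 h9 h10 h11 h12
  have hD : (a1 ^ l * (a2 ^ l * b2 ^ l) - a2 ^ l * (a1 ^ l * b1 ^ l)) - (a0 ^ l * (a2 ^ l * b2 ^ l) - a2 ^ l * (a0 ^ l * b0 ^ l)) + (a0 ^ l * (a1 ^ l * b1 ^ l) - a1 ^ l * (a0 ^ l * b0 ^ l)) > 0 := by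
    have e : ((a1 ^ l * (a2 ^ l * b2 ^ l) - a2 ^ l * (a1 ^ l * b1 ^ l)) - (a0 ^ l * (a2 ^ l * b2 ^ l) - a2 ^ l * (a0 ^ l * b0 ^ l)) + (a0 ^ l * (a1 ^ l * b1 ^ l) - a1 ^ l * (a0 ^ l * b0 ^ l))) = (1 * (a1 * (a2 * b2)) ^ l * ((1:ℝ)) ^ ⌈η * (l:ℝ)⌉₊) - (1 * (a2 * (a1 * b1)) ^ l * ((1:ℝ)) ^ ⌈η * (l:ℝ)⌉₊) - (1 * (a0 * (a2 * b2)) ^ l * ((1:ℝ)) ^ ⌈η * (l:ℝ)⌉₊) + (1 * (a2 * (a0 * b0)) ^ l * ((1:ℝ)) ^ ⌈η * (l:ℝ)⌉₊) + (1 * (a0 * (a1 * b1)) ^ l * ((1:ℝ)) ^ ⌈η * (l:ℝ)⌉₊) - (1 * (a1 * (a0 * b0)) ^ l * ((1:ℝ)) ^ ⌈η * (l:ℝ)⌉₊) := by ring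
    rw [e]
    linarith [h1, h2, h3, (by positivity : (0:ℝ) ≤ 1 * (a1 * (a2 * b2)) ^ l * ((1:ℝ)) ^ ⌈η * (l:ℝ)⌉₊), (by positivity : (0:ℝ) ≤ 1 * (a2 * (a0 * b0)) ^ l * ((1:ℝ)) ^ ⌈η * (l:ℝ)⌉₊)]
  have hNe : (a1 ^ l * (w2 * (a2 * b2) ^ l * a2⁻¹ ^ ⌈η * (l:ℝ)⌉₊) - a2 ^ l * (w1 * (a1 * b1) ^ l * a1⁻¹ ^ ⌈η * (l:ℝ)⌉₊)) - (a0 ^ l * (w2 * (a2 * b2) ^ l * a2⁻¹ ^ ⌈η * (l:ℝ)⌉₊) - a2 ^ l * (w0 * (a0 * b0) ^ l * a0⁻¹ ^ ⌈η * (l:ℝ)⌉₊)) + (a0 ^ l * (w1 * (a1 * b1) ^ l * a1⁻¹ ^ ⌈η * (l:ℝ)⌉₊) - a1 ^ l * (w0 * (a0 * b0) ^ l * a0⁻¹ ^ ⌈η * (l:ℝ)⌉₊)) > 0 := by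
    have e : ((a1 ^ l * (w2 * (a2 * b2) ^ l * a2⁻¹ ^ ⌈η * (l:ℝ)⌉₊) - a2 ^ l * (w1 * (a1 * b1) ^ l * a1⁻¹ ^ ⌈η * (l:ℝ)⌉₊)) - (a0 ^ l * (w2 * (a2 * b2) ^ l * a2⁻¹ ^ ⌈η * (l:ℝ)⌉₊) - a2 ^ l * (w0 * (a0 * b0) ^ l * a0⁻¹ ^ ⌈η * (l:ℝ)⌉₊)) + (a0 ^ l * (w1 * (a1 * b1) ^ l * a1⁻¹ ^ ⌈η * (l:ℝ)⌉₊) - a1 ^ l * (w0 * (a0 * b0) ^ l * a0⁻¹ ^ ⌈η * (l:ℝ)⌉₊))) = (w2 * (a1 * (a2 * b2)) ^ l * (a2⁻¹) ^ ⌈η * (l:ℝ)⌉₊) - (w1 * (a2 * (a1 * b1)) ^ l * (a1⁻¹) ^ ⌈η * (l:ℝ)⌉₊) - (w2 * (a0 * (a2 * b2)) ^ l * (a2⁻¹) ^ ⌈η * (l:ℝ)⌉₊) + (w0 * (a2 * (a0 * b0)) ^ l * (a0⁻¹) ^ ⌈η * (l:ℝ)⌉₊) + (w1 * (a0 * (a1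 * b1)) ^ l * (a1⁻¹) ^ ⌈η * (l:ℝ)⌉₊) - (w0 * (a1 * (a0 * b0)) ^ l * (a0⁻¹) ^ ⌈η * (l:ℝ)⌉₊) := by ring
    rw [e]
    linarith [h4, h5, h6, (by positivity : (0:ℝ) ≤ w2 * (a1 * (a2 * b2)) ^ l * (a2⁻¹) ^ ⌈η * (l:ℝ)⌉₊), (by positivity : (0:ℝ) ≤ w0 * (a2 * (a0 * b0)) ^ l * (a0⁻¹) ^ ⌈η * (l:ℝ)⌉₊)]
  have hNd : ((w1 * (a1 * b1) ^ l * a1⁻¹ ^ ⌈η * (l:ℝ)⌉₊) * (a2 ^ l * b2 ^ l) - (w2 * (a2 * b2) ^ l * a2⁻¹ ^ ⌈η * (l:ℝ)⌉₊) * (a1 ^ l * b1 ^ l)) - ((w0 * (a0 * b0) ^ l * a0⁻¹ ^ ⌈η * (l:ℝ)⌉₊) * (a2 ^ l * b2 ^ l) - (w2 * (a2 * b2) ^ l * a2⁻¹ ^ ⌈η * (l:ℝ)⌉₊) * (a0 ^ l * b0 ^ l)) + ((w0 * (a0 * b0) ^ l * a0⁻¹ ^ ⌈η * (l:ℝ)⌉₊)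 * (a1 ^ l * b1 ^ l) - (w1 * (a1 * b1) ^ l * a1⁻¹ ^ ⌈η * (l:ℝ)⌉₊) * (a0 ^ l * b0 ^ l)) > 0 := by
    have e : (((w1 * (a1 * b1) ^ l * a1⁻¹ ^ ⌈η * (l:ℝ)⌉₊) * (a2 ^ l * b2 ^ l) - (w2 * (a2 * b2) ^ l * a2⁻¹ ^ ⌈η * (l:ℝ)⌉₊) * (a1 ^ l * b1 ^ l)) - ((w0 * (a0 * b0) ^ l * a0⁻¹ ^ ⌈η * (l:ℝ)⌉₊) * (a2 ^ l * b2 ^ l) - (w2 * (a2 * b2) ^ l * a2⁻¹ ^ ⌈η * (l:ℝ)⌉₊) * (a0 ^ l * b0 ^ l)) + ((w0 * (a0 * b0) ^ l * a0⁻¹ ^ ⌈η * (l:ℝ)⌉₊) * (a1 ^ l * b1 ^ l) - (w1 * (a1 * b1) ^ l * a1⁻¹ ^ ⌈η * (l:ℝ)⌉₊) * (a0 ^ l * b0 ^ l))) = (w1 * ((a1 * b1) * (a2 * b2)) ^ l * (a1⁻¹) ^ ⌈η * (l:ℝ)⌉₊) - (w2 * ((a2 * b2) * (a1 * b1)) ^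 l * (a2⁻¹) ^ ⌈η * (l:ℝ)⌉₊) - (w0 * ((a0 * b0) * (a2 * b2)) ^ l * (a0⁻¹) ^ ⌈η * (l:ℝ)⌉₊) + (w2 * ((a2 * b2) * (a0 * b0)) ^ l * (a2⁻¹) ^ ⌈η * (l:ℝ)⌉₊) + (w0 * ((a0 * b0) * (a1 * b1)) ^ l * (a0⁻¹) ^ ⌈η * (l:ℝ)⌉₊) - (w1 * ((a1 * b1) * (a0 * b0)) ^ l * (a1⁻¹) ^ ⌈η * (l:ℝ)⌉₊) := by ring
    rw [e]
    linarith [h7, h8, h9, (by positivity : (0:ℝ) ≤ w1 * ((a1 * b1) * (a2 * b2)) ^ l * (a1⁻¹) ^ ⌈η * (l:ℝ)⌉₊), (by positivity : (0:ℝ) ≤ w2 * ((a2 * b2) * (a0 * b0)) ^ l * (a2⁻¹) ^ ⌈η * (l:ℝ)⌉₊)]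
  have hNc : (w0 * (a0 * b0) ^ l * a0⁻¹ ^ ⌈η * (l:ℝ)⌉₊) * (a1 ^ l * (a2 ^ l * b2 ^ l) - a2 ^ l * (a1 ^ l * b1 ^ l)) - (w1 * (a1 * b1) ^ l * a1⁻¹ ^ ⌈η * (l:ℝ)⌉₊) * (a0 ^ l * (a2 ^ l * b2 ^ l) - a2 ^ l * (a0 ^ l * b0 ^ l)) + (w2 * (a2 * b2) ^ l * a2⁻¹ ^ ⌈η * (l:ℝ)⌉₊) * (a0 ^ l * (a1 ^ l * b1 ^ l) - a1 ^ l * (a0 ^ l * b0 ^ l)) > 0 := by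
    have e : ((w0 * (a0 * b0) ^ l * a0⁻¹ ^ ⌈η * (l:ℝ)⌉₊) * (a1 ^ l * (a2 ^ l * b2 ^ l) - a2 ^ l * (a1 ^ l * b1 ^ l)) - (w1 * (a1 * b1) ^ l * a1⁻¹ ^ ⌈η * (l:ℝ)⌉₊) * (a0 ^ l * (a2 ^ l * b2 ^ l) - a2 ^ l * (a0 ^ l * b0 ^ l)) + (w2 * (a2 * b2) ^ l * a2⁻¹ ^ ⌈η * (l:ℝ)⌉₊) * (a0 ^ l * (a1 ^ l * b1 ^ l) - a1 ^ l * (a0 ^ l * b0 ^ l))) = (w0 * ((a0 * b0) * (a1 * (a2 * b2))) ^ l * (a0⁻¹) ^ ⌈η * (l:ℝ)⌉₊) - (w0 * ((a0 * b0) * (a2 * (a1 * b1))) ^ l * (a0⁻¹) ^ ⌈η * (l:ℝ)⌉₊) - (w1 * ((a1 * b1) * (a0 * (a2 * b2))) ^ l * (a1⁻¹) ^ ⌈η * (l:ℝ)⌉₊) + (w1 * ((a1 * b1) * (a2 * (a0 * b0))) ^ l * (a1⁻¹) ^ ⌈η * (l:ℝ)⌉₊) + (w2 * ((a2 * b2)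 * (a0 * (a1 * b1))) ^ l * (a2⁻¹) ^ ⌈η * (l:ℝ)⌉₊) - (w2 * ((a2 * b2) * (a1 * (a0 * b0))) ^ l * (a2⁻¹) ^ ⌈η * (l:ℝ)⌉₊) := by ring
    rw [e]
    linarith [h10, h11, h12, (by positivity : (0:ℝ) ≤ w0 * ((a0 * b0) * (a1 * (a2 * b2))) ^ l * (a0⁻¹) ^ ⌈η * (l:ℝ)⌉₊), (by positivity : (0:ℝ) ≤ w1 * ((a1 * b1) * (a2 * (a0 * b0))) ^ l * (a1⁻¹) ^ ⌈η * (l:ℝ)⌉₊)]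
  have hDne : ((a1 ^ l * (a2 ^ l * b2 ^ l) - a2 ^ l * (a1 ^ l * b1 ^ l)) - (a0 ^ l * (a2 ^ l * b2 ^ l) - a2 ^ l * (a0 ^ l * b0 ^ l)) + (a0 ^ l * (a1 ^ l * b1 ^ l) - a1 ^ l * (a0 ^ l * b0 ^ l))) ≠ 0 := ne_of_gt hD
  obtain ⟨e0, e1, e2⟩ := cramer3 (w0 * (a0 * b0) ^ l * a0⁻¹ ^ ⌈η * (l:ℝ)⌉₊) (w1 * (a1 * b1) ^ l * a1⁻¹ ^ ⌈η * (l:ℝ)⌉₊) (w2 * (a2 * b2) ^ l * a2⁻¹ ^ ⌈η * (l:ℝ)⌉₊) (a0 ^ l) (a1 ^ l) (a2 ^ l) (a0 ^ l * b0 ^ l) (a1 ^ l * b1 ^ l) (a2 ^ l * b2 ^ l) hDne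
  exact ⟨_, _, _, div_pos_iff.mpr (Or.inl ⟨hNc, hD⟩), div_pos_iff.mpr (Or.inl ⟨hNd, hD⟩),
    div_pos_iff.mpr (Or.inl ⟨hNe, hD⟩), e0, e1, e2⟩


/-- Lemma 6.10 of the paper: existence, for all large `l`, of an
element `α ∈ π_ℋ⁻¹·E₊(𝔣)` lying in the prescribed cones, with `Log(α)` in the
ball `B(−l₀(l·M₁), 4·l·r)`. -/
theorem stmt10 (E : Subgroup V3ˣ) (hE : IsUnitLattice E) (g₁ g₂ : V3ˣ)
    (hfree : FreeRank2FinIndex E g₁ g₂)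
    (hsign : ∀ m : ℕ, 1 ≤ m →
      deltaB ((g₁ : V3) ^ m) ((g₂ : V3) ^ m) = 1 ∧
      deltaB ((g₂ : V3) ^ m) ((g₁ : V3) ^ m) = -1)
    (hg₁ : (g₁ : V3) 1 > ((g₁ : V3) 0)⁻¹ ^ 2 ∧ ((g₁ : V3) 0)⁻¹ ^ 2 > ((g₁ : V3) 0)⁻¹ ∧
      ((g₁ : V3) 0)⁻¹ > 1)
    (hg₂ : (g₂ : V3) 0 < (g₂ : V3) 1 ∧ (g₂ : V3) 1 < 1)
    (r M₁ : ℝ) (hr : 0 < r) (hM₁ : 0 < M₁)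
    (hball₁ : Log3 (g₁ : V3) ∈ Metric.ball (lvec 1 M₁) r)
    (hball₂ : Log3 (g₂ : V3) ∈ Metric.ball (lvec 2 M₁) r)
    (π : V3) (hπ : IsPos π) :
    ∃ L : ℝ, 0 < L ∧ ∀ l : ℕ, (l : ℝ) > L → ∃ u ∈ E,
      (projH π)⁻¹ * ((u : V3ˣ) : V3) ∈
        coneB ((g₁ : V3) ^ l) ((g₂ : V3) ^ l) ∪ coneB ((g₂ : V3) ^ l) ((g₁ : V3) ^ l) ∪
          cone2 1 ((g₁ : V3) ^ l * (g₂ : V3) ^ l) ∧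
      Log3 ((projH π)⁻¹ * ((u : V3ˣ) : V3)) ∈
        Metric.ball (-lvec 0 ((l : ℝ) * M₁)) (4 * (l : ℝ) * r) := by
  obtain ⟨hg1E, hg2E, -, -⟩ := hfree
  have hpos1 : IsPos ((g₁ : V3ˣ) : V3) := hE.1 g₁ hg1E
  have hpos2 : IsPos ((g₂ : V3ˣ) : V3) := hE.1 g₂ hg2E
  have ha0 : 0 < ((g₁ : V3) 0) := hpos1 0
  have hb0 : 0 < ((g₂ : V3) 0) := hpos2 0
  have ha1 : 0 < ((g₁ : V3) 1) := hpos1 1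
  have hb1 : 0 < ((g₂ : V3) 1) := hpos2 1
  have ha2 : 0 < ((g₁ : V3) 2) := hpos1 2
  have hb2 : 0 < ((g₂ : V3) 2) := hpos2 2
  have hsum1 := hE.2.1 g₁ hg1E
  have hsum2 := hE.2.1 g₂ hg2E
  simp only [Log3] at hsum1 hsum2
  have hprod1 : ((g₁ : V3) 0) * ((g₁ : V3) 1) * ((g₁ : V3) 2) = 1 := by
    have h := congrArg Real.exp hsum1
    rwa [Real.exp_add, Real.exp_add, Real.exp_log ha0, Real.exp_log ha1, Real.exp_log ha2,
      Real.exp_zero] at h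
  have hprod2 : ((g₂ : V3) 0) * ((g₂ : V3) 1) * ((g₂ : V3) 2) = 1 := by
    have h := congrArg Real.exp hsum2
    rwa [Real.exp_add, Real.exp_add, Real.exp_log hb0, Real.exp_log hb1, Real.exp_log hb2,
      Real.exp_zero] at h
  obtain ⟨hgA, hgB, hgC⟩ := hg₁
  have hinv : ((g₁ : V3) 0) * (((g₁ : V3) 0))⁻¹ = 1 := mul_inv_cancel₀ ha0.ne'
  have ha01 : ((g₁ : V3) 0) < 1 := by nlinarith
  have ha11 : 1 < ((g₁ : V3) 1) := by nlinarith
  have hsq : 1 < ((g₁ : V3) 0) ^ 2 * ((g₁ : V3) 1) := by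
    have h2 : ((g₁ : V3) 0) ^ 2 * (((g₁ : V3) 0))⁻¹ ^ 2 = 1 := by
      rw [← mul_pow, hinv, one_pow]
    nlinarith [pow_pos ha0 2]
  have ha20 : ((g₁ : V3) 2) < ((g₁ : V3) 0) := by nlinarith [mul_pos ha0 ha1]
  have hb01 : ((g₂ : V3) 0) < ((g₂ : V3) 1) := hg₂.1
  have hb11 : ((g₂ : V3) 1) < 1 := hg₂.2
  have hb21 : 1 < ((g₂ : V3) 2) := by nlinarith [mul_pos hb0 hb1]
  have hππ : 0 < π 0 * π 1 * π 2 := by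
    have h0 := hπ 0; have h1 := hπ 1; have h2 := hπ 2; positivity
  have hpr : ∀ i, 0 < projH π i := fun i => mul_pos (Real.rpow_pos_of_pos hππ _) (hπ i)
  have hw0 : 0 < (projH π 0)⁻¹ := inv_pos.mpr (hpr 0)
  have hw1 : 0 < (projH π 1)⁻¹ := inv_pos.mpr (hpr 1)
  have hw2 : 0 < (projH π 2)⁻¹ := inv_pos.mpr (hpr 2)
  have hXc : ∀ (p q : ℕ) (k : Fin 3),
      ((projH π)⁻¹ * ((g₁ ^ p * g₂ ^ q : V3ˣ) : V3)) k =
        (projH π k)⁻¹ * (((g₁ : V3) k) ^ p * ((g₂ : V3) k) ^ q) := by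
    intro p q k
    simp [Pi.mul_apply, Pi.inv_apply, Units.val_mul, Units.val_pow_eq_pow_val, Pi.pow_apply]
  have hsplit : ∀ (x : ℝ) (n m : ℕ), 0 < x → m ≤ n → x ^ (n - m) = x ^ n * (x⁻¹) ^ m := by
    intro x n m hx hmn
    rw [inv_pow, eq_comm, mul_inv_eq_iff_eq_mul₀ (by positivity), ← pow_add]
    congr 1
    omega
  have hd10 : |Real.log ((g₁ : V3) 0) + M₁/2| < r := by
    have e2 : Real.log ((g₁ : V3) 0) + M₁/2 = Log3 (g₁ : V3) 0 - lvec 1 M₁ 0 := by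
      rw [show lvec 1 M₁ 0 = -M₁/2 from rfl]
      simp only [Log3]
      try ring
    rw [e2, ← Real.dist_eq]
    exact lt_of_le_of_lt (dist_le_pi_dist _ _ 0) (Metric.mem_ball.mp hball₁)
  have hd11 : |Real.log ((g₁ : V3) 1) - M₁| < r := by
    have e2 : Real.log ((g₁ : V3) 1) - M₁ = Log3 (g₁ : V3) 1 - lvec 1 M₁ 1 := by
      rw [show lvec 1 M₁ 1 = M₁ from rfl]
      simp only [Log3]
      try ring
    rw [e2, ← Real.dist_eq]
    exact lt_of_le_of_lt (dist_le_pi_dist _ _ 1) (Metric.mem_ball.mp hball₁)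
  have hd12 : |Real.log ((g₁ : V3) 2) + M₁/2| < r := by
    have e2 : Real.log ((g₁ : V3) 2) + M₁/2 = Log3 (g₁ : V3) 2 - lvec 1 M₁ 2 := by
      rw [show lvec 1 M₁ 2 = -M₁/2 from rfl]
      simp only [Log3]
      try ring
    rw [e2, ← Real.dist_eq]
    exact lt_of_le_of_lt (dist_le_pi_dist _ _ 2) (Metric.mem_ball.mp hball₁)
  have hd20 : |Real.log ((g₂ : V3) 0) + M₁/2| < r := by
    have e2 : Real.log ((g₂ : V3) 0) + M₁/2 = Log3 (g₂ : V3) 0 - lvec 2 M₁ 0 := by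
      rw [show lvec 2 M₁ 0 = -M₁/2 from rfl]
      simp only [Log3]
      try ring
    rw [e2, ← Real.dist_eq]
    exact lt_of_le_of_lt (dist_le_pi_dist _ _ 0) (Metric.mem_ball.mp hball₂)
  have hd21 : |Real.log ((g₂ : V3) 1) + M₁/2| < r := by
    have e2 : Real.log ((g₂ : V3) 1) + M₁/2 = Log3 (g₂ : V3) 1 - lvec 2 M₁ 1 := by
      rw [show lvec 2 M₁ 1 = -M₁/2 from rfl]
      simp only [Log3]
      try ring
    rw [e2, ← Real.dist_eq]
    exact lt_of_le_of_lt (dist_le_pi_dist _ _ 1) (Metric.mem_ball.mp hball₂)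
  have hd22 : |Real.log ((g₂ : V3) 2) - M₁| < r := by
    have e2 : Real.log ((g₂ : V3) 2) - M₁ = Log3 (g₂ : V3) 2 - lvec 2 M₁ 2 := by
      rw [show lvec 2 M₁ 2 = M₁ from rfl]
      simp only [Log3]
      try ring
    rw [e2, ← Real.dist_eq]
    exact lt_of_le_of_lt (dist_le_pi_dist _ _ 2) (Metric.mem_ball.mp hball₂)
  have hBALL : ∀ η : ℝ, 0 < η → η ≤ 1/2 → η ≤ r/(2*M₁) → ∀ᶠ l : ℕ in Filter.atTop,
      Log3 ((projH π)⁻¹ * ((g₁ ^ (l - ⌈η * (l:ℝ)⌉₊) * g₂ ^ l : V3ˣ) : V3)) ∈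
        Metric.ball (-lvec 0 ((l:ℝ) * M₁)) (4 * (l:ℝ) * r) := by
    intro η hη hη1 hη2
    filter_upwards [ball_aux (Real.log ((g₁ : V3) 0)) (Real.log ((g₁ : V3) 1)) (Real.log ((g₁ : V3) 2))
        (Real.log ((g₂ : V3) 0)) (Real.log ((g₂ : V3) 1)) (Real.log ((g₂ : V3) 2))
        (Real.log ((projH π 0)⁻¹)) (Real.log ((projH π 1)⁻¹)) (Real.log ((projH π 2)⁻¹))
        r M₁ η hr hM₁ hη hη1 hη2 hd10 hd11 hd12 hd20 hd21 hd22,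
      Filter.eventually_ge_atTop 1] with l hb hl1
    have hlpos : (0:ℝ) < (l:ℝ) := by exact_mod_cast hl1
    rw [Metric.mem_ball, dist_pi_lt_iff (mul_pos (mul_pos (by norm_num : (0:ℝ) < 4) hlpos) hr)]
    have hlog : ∀ k : Fin 3, Log3 ((projH π)⁻¹ * ((g₁ ^ (l - ⌈η * (l:ℝ)⌉₊) * g₂ ^ l : V3ˣ) : V3)) k
        = Real.log ((projH π k)⁻¹) + ((l - ⌈η * (l:ℝ)⌉₊ : ℕ):ℝ) * Real.log ((g₁ : V3) k)
          + (l:ℝ) * Real.log ((g₂ : V3) k) := by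
      intro k
      show Real.log (((projH π)⁻¹ * ((g₁ ^ (l - ⌈η * (l:ℝ)⌉₊) * g₂ ^ l : V3ˣ) : V3)) k) = _
      rw [hXc, Real.log_mul (inv_pos.mpr (hpr k)).ne'
          (mul_ne_zero (pow_ne_zero _ (hpos1 k).ne') (pow_ne_zero _ (hpos2 k).ne')),
        Real.log_mul (pow_ne_zero _ (hpos1 k).ne') (pow_ne_zero _ (hpos2 k).ne'),
        Real.log_pow, Real.log_pow]
      ring
    intro i
    fin_cases i
    · show dist (Log3 ((projH π)⁻¹ * ((g₁ ^ (l - ⌈η * (l:ℝ)⌉₊) * g₂ ^ l : V3ˣ) : V3)) 0)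
          ((-lvec 0 ((l:ℝ)*M₁)) 0) < 4 * (l:ℝ) * r
      rw [Real.dist_eq, hlog 0,
        show (-lvec 0 ((l:ℝ)*M₁)) 0 = -((l:ℝ)*M₁) from by
          rw [Pi.neg_apply, show lvec 0 ((l:ℝ)*M₁) 0 = (l:ℝ)*M₁ from rfl],
        sub_neg_eq_add]
      exact hb.1
    · show dist (Log3 ((projH π)⁻¹ * ((g₁ ^ (l - ⌈η * (l:ℝ)⌉₊) * g₂ ^ l : V3ˣ) : V3)) 1)
          ((-lvec 0 ((l:ℝ)*M₁)) 1) < 4 * (l:ℝ) * r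
      rw [Real.dist_eq, hlog 1,
        show (-lvec 0 ((l:ℝ)*M₁)) 1 = (l:ℝ)*M₁/2 from by
          rw [Pi.neg_apply, show lvec 0 ((l:ℝ)*M₁) 1 = -((l:ℝ)*M₁)/2 from rfl]; ring]
      exact hb.2.1
    · show dist (Log3 ((projH π)⁻¹ * ((g₁ ^ (l - ⌈η * (l:ℝ)⌉₊) * g₂ ^ l : V3ˣ) : V3)) 2)
          ((-lvec 0 ((l:ℝ)*M₁)) 2) < 4 * (l:ℝ) * r
      rw [Real.dist_eq, hlog 2,
        show (-lvec 0 ((l:ℝ)*M₁)) 2 = (l:ℝ)*M₁/2 from by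
          rw [Pi.neg_apply, show lvec 0 ((l:ℝ)*M₁) 2 = -((l:ℝ)*M₁)/2 from rfl]; ring]
      exact hb.2.2
  have hLa0 : Real.log ((g₁ : V3) 0) < 0 := Real.log_neg ha0 ha01
  have hLa1 : 0 < Real.log ((g₁ : V3) 1) := Real.log_pos ha11
  have hLa20 : Real.log ((g₁ : V3) 2) < Real.log ((g₁ : V3) 0) := Real.log_lt_log ha2 ha20
  have hLb01 : Real.log ((g₂ : V3) 0) < Real.log ((g₂ : V3) 1) := Real.log_lt_log hb0 hb01
  have hLb1 : Real.log ((g₂ : V3) 1) < 0 := Real.log_neg hb1 hb11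
  have hLb2 : 0 < Real.log ((g₂ : V3) 2) := Real.log_pos hb21
  have MAIN : ∀ᶠ l : ℕ in Filter.atTop, ∃ u ∈ E,
      (projH π)⁻¹ * ((u : V3ˣ) : V3) ∈
        coneB ((g₁ : V3) ^ l) ((g₂ : V3) ^ l) ∪ coneB ((g₂ : V3) ^ l) ((g₁ : V3) ^ l) ∪
          cone2 1 ((g₁ : V3) ^ l * (g₂ : V3) ^ l) ∧
      Log3 ((projH π)⁻¹ * ((u : V3ˣ) : V3)) ∈
        Metric.ball (-lvec 0 ((l : ℝ) * M₁)) (4 * (l : ℝ) * r) := by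
    rcases le_or_gt (((g₁ : V3) 0) * ((g₂ : V3) 0)) (((g₁ : V3) 2) * ((g₂ : V3) 2)) with hG | hG
    · set η := min (r/(2*M₁)) (1/2) with hηdef
      have hη : 0 < η := lt_min (by positivity) (by norm_num)
      have hη1 : η ≤ 1/2 := min_le_right _ _
      have hη2 : η ≤ r/(2*M₁) := min_le_left _ _
      have hmain := caseG2 ((g₁ : V3) 0) ((g₁ : V3) 1) ((g₁ : V3) 2) ((g₂ : V3) 0) ((g₂ : V3) 1) ((g₂ : V3) 2)
        ((projH π 0)⁻¹) ((projH π 1)⁻¹) ((projH π 2)⁻¹) η ha0 ha1 ha2 hb0 hb1 hb2 hw0 hw1 hw2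
        hη hη1 ha01 ha11 ha20 hb01 hb11 hb21 hG (Or.inr rfl) (Or.inr rfl) (Or.inr rfl)
      filter_upwards [hmain, hBALL η hη hη1 hη2, Filter.eventually_ge_atTop 1] with l hm hballm hl1
      obtain ⟨c, d, e, hc, hd, he, he0, he1, he2⟩ := hm
      have hJl : ⌈η * (l:ℝ)⌉₊ ≤ l := ceil_le_self hη hη1 l
      refine ⟨g₁ ^ (l - ⌈η * (l:ℝ)⌉₊) * g₂ ^ l, mul_mem (pow_mem hg1E _) (pow_mem hg2E _), ?_, hballm⟩
      refine Or.inl (Or.inr ?_)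
      simp only [coneB, cone3, Set.mem_setOf_eq]
      refine ⟨c, d, e, hc, hd, he, ?_⟩
      funext k
      fin_cases k
      · show ((projH π)⁻¹ * ((g₁ ^ (l - ⌈η * (l:ℝ)⌉₊) * g₂ ^ l : V3ˣ) : V3)) 0 = _
        rw [hXc]
        show (projH π 0)⁻¹ * (((g₁ : V3) 0) ^ (l - ⌈η * (l:ℝ)⌉₊) * ((g₂ : V3) 0) ^ l) = c * 1 + d * ((g₂ : V3) 0) ^ l + e * (((g₂ : V3) 0) ^ l * ((g₁ : V3) 0) ^ l)
        rw [hsplit ((g₁ : V3) 0) l ⌈η * (l:ℝ)⌉₊ ha0 hJl]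
        calc (projH π 0)⁻¹ * (((g₁ : V3) 0) ^ l * (((g₁ : V3) 0))⁻¹ ^ ⌈η * (l:ℝ)⌉₊ * ((g₂ : V3) 0) ^ l)
            = (projH π 0)⁻¹ * (((g₁ : V3) 0) * ((g₂ : V3) 0)) ^ l * (((g₁ : V3) 0))⁻¹ ^ ⌈η * (l:ℝ)⌉₊ := by ring
          _ = c + d * (((g₂ : V3) 0) ^ l) + e * (((g₂ : V3) 0) ^ l * ((g₁ : V3) 0) ^ l) := he0
          _ = c * 1 + d * ((g₂ : V3) 0) ^ l + e * (((g₂ : V3) 0) ^ l * ((g₁ : V3) 0) ^ l) := by ring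
      · show ((projH π)⁻¹ * ((g₁ ^ (l - ⌈η * (l:ℝ)⌉₊) * g₂ ^ l : V3ˣ) : V3)) 1 = _
        rw [hXc]
        show (projH π 1)⁻¹ * (((g₁ : V3) 1) ^ (l - ⌈η * (l:ℝ)⌉₊) * ((g₂ : V3) 1) ^ l) = c * 1 + d * ((g₂ : V3) 1) ^ l + e * (((g₂ : V3) 1) ^ l * ((g₁ : V3) 1) ^ l)
        rw [hsplit ((g₁ : V3) 1) l ⌈η * (l:ℝ)⌉₊ ha1 hJl]
        calc (projH π 1)⁻¹ * (((g₁ : V3) 1) ^ l * (((g₁ : V3) 1))⁻¹ ^ ⌈η * (l:ℝ)⌉₊ * ((g₂ : V3) 1) ^ l)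
            = (projH π 1)⁻¹ * (((g₁ : V3) 1) * ((g₂ : V3) 1)) ^ l * (((g₁ : V3) 1))⁻¹ ^ ⌈η * (l:ℝ)⌉₊ := by ring
          _ = c + d * (((g₂ : V3) 1) ^ l) + e * (((g₂ : V3) 1) ^ l * ((g₁ : V3) 1) ^ l) := he1
          _ = c * 1 + d * ((g₂ : V3) 1) ^ l + e * (((g₂ : V3) 1) ^ l * ((g₁ : V3) 1) ^ l) := by ring
      · show ((projH π)⁻¹ * ((g₁ ^ (l - ⌈η * (l:ℝ)⌉₊) * g₂ ^ l : V3ˣ) : V3)) 2 = _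
        rw [hXc]
        show (projH π 2)⁻¹ * (((g₁ : V3) 2) ^ (l - ⌈η * (l:ℝ)⌉₊) * ((g₂ : V3) 2) ^ l) = c * 1 + d * ((g₂ : V3) 2) ^ l + e * (((g₂ : V3) 2) ^ l * ((g₁ : V3) 2) ^ l)
        rw [hsplit ((g₁ : V3) 2) l ⌈η * (l:ℝ)⌉₊ ha2 hJl]
        calc (projH π 2)⁻¹ * (((g₁ : V3) 2) ^ l * (((g₁ : V3) 2))⁻¹ ^ ⌈η * (l:ℝ)⌉₊ * ((g₂ : V3) 2) ^ l)
            = (projH π 2)⁻¹ * (((g₁ : V3) 2) * ((g₂ : V3) 2)) ^ l * (((g₁ : V3) 2))⁻¹ ^ ⌈η * (l:ℝ)⌉₊ := by ring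
          _ = c + d * (((g₂ : V3) 2) ^ l) + e * (((g₂ : V3) 2) ^ l * ((g₁ : V3) 2) ^ l) := he2
          _ = c * 1 + d * ((g₂ : V3) 2) ^ l + e * (((g₂ : V3) 2) ^ l * ((g₁ : V3) 2) ^ l) := by ring
    · have hGlog : Real.log ((g₁ : V3) 2) + Real.log ((g₂ : V3) 2) < Real.log ((g₁ : V3) 0) + Real.log ((g₂ : V3) 0) := by
        have h := Real.log_lt_log (by positivity) hG
        rwa [Real.log_mul (by positivity) (by positivity),
          Real.log_mul (by positivity) (by positivity)] at h
      set T1 := ((Real.log ((g₁ : V3) 1) + Real.log ((g₂ : V3) 1)) - (Real.log ((g₁ : V3) 2) + Real.log ((g₂ : V3) 2))) /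
          (2*(Real.log ((g₁ : V3) 1) - Real.log ((g₁ : V3) 2))) with hT1def
      set T2 := (Real.log ((g₂ : V3) 1) - Real.log ((g₂ : V3) 0)) / (2*(Real.log ((g₁ : V3) 1) - Real.log ((g₁ : V3) 0))) with hT2def
      set T3 := ((Real.log ((g₁ : V3) 0) + Real.log ((g₂ : V3) 0)) - (Real.log ((g₁ : V3) 2) + Real.log ((g₂ : V3) 2))) /
          (2*(Real.log ((g₁ : V3) 0) - Real.log ((g₁ : V3) 2))) with hT3def
      have hden1 : 0 < Real.log ((g₁ : V3) 1) - Real.log ((g₁ : V3) 2) := by linarith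
      have hden2 : 0 < Real.log ((g₁ : V3) 1) - Real.log ((g₁ : V3) 0) := by linarith
      have hden3 : 0 < Real.log ((g₁ : V3) 0) - Real.log ((g₁ : V3) 2) := by linarith
      have hnum1 : 0 < (Real.log ((g₁ : V3) 1) + Real.log ((g₂ : V3) 1)) - (Real.log ((g₁ : V3) 2) + Real.log ((g₂ : V3) 2)) := by linarith
      have hnum2 : 0 < Real.log ((g₂ : V3) 1) - Real.log ((g₂ : V3) 0) := by linarith
      have hnum3 : 0 < (Real.log ((g₁ : V3) 0) + Real.log ((g₂ : V3) 0)) - (Real.log ((g₁ : V3) 2) + Real.log ((g₂ : V3) 2)) := by linarith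
      set η := min (min (r/(2*M₁)) (1/2)) (min T1 (min T2 T3)) with hηdef
      have hη : 0 < η := lt_min (lt_min (by positivity) (by norm_num))
        (lt_min (div_pos hnum1 (by linarith)) (lt_min (div_pos hnum2 (by linarith))
          (div_pos hnum3 (by linarith))))
      have hη1 : η ≤ 1/2 := le_trans (min_le_left _ _) (min_le_right _ _)
      have hη2 : η ≤ r/(2*M₁) := le_trans (min_le_left _ _) (min_le_left _ _)
      have hT1 : η * (Real.log ((g₁ : V3) 1) - Real.log ((g₁ : V3) 2)) ≤
          (1/2) * ((Real.log ((g₁ : V3) 1) + Real.log ((g₂ : V3) 1)) - (Real.log ((g₁ : V3) 2) + Real.log ((g₂ : V3) 2))) := by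
        have h1 : η ≤ T1 := le_trans (min_le_right _ _) (min_le_left _ _)
        calc η * (Real.log ((g₁ : V3) 1) - Real.log ((g₁ : V3) 2))
            ≤ T1 * (Real.log ((g₁ : V3) 1) - Real.log ((g₁ : V3) 2)) := mul_le_mul_of_nonneg_right h1 hden1.le
          _ = (1/2) * ((Real.log ((g₁ : V3) 1) + Real.log ((g₂ : V3) 1)) - (Real.log ((g₁ : V3) 2) + Real.log ((g₂ : V3) 2))) := by
              rw [hT1def, div_mul_half _ _ (ne_of_gt hden1)]
      have hT2 : η * (Real.log ((g₁ : V3) 1) - Real.log ((g₁ : V3) 0)) ≤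
          (1/2) * (Real.log ((g₂ : V3) 1) - Real.log ((g₂ : V3) 0)) := by
        have h1 : η ≤ T2 := le_trans (min_le_right _ _) (le_trans (min_le_right _ _) (min_le_left _ _))
        calc η * (Real.log ((g₁ : V3) 1) - Real.log ((g₁ : V3) 0))
            ≤ T2 * (Real.log ((g₁ : V3) 1) - Real.log ((g₁ : V3) 0)) := mul_le_mul_of_nonneg_right h1 hden2.le
          _ = (1/2) * (Real.log ((g₂ : V3) 1) - Real.log ((g₂ : V3) 0)) := by
              rw [hT2def, div_mul_half _ _ (ne_of_gt hden2)]
      have hT3 : η * (Real.log ((g₁ : V3) 0) - Real.log ((g₁ : V3) 2)) ≤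
          (1/2) * ((Real.log ((g₁ : V3) 0) + Real.log ((g₂ : V3) 0)) - (Real.log ((g₁ : V3) 2) + Real.log ((g₂ : V3) 2))) := by
        have h1 : η ≤ T3 := le_trans (min_le_right _ _) (le_trans (min_le_right _ _) (min_le_right _ _))
        calc η * (Real.log ((g₁ : V3) 0) - Real.log ((g₁ : V3) 2))
            ≤ T3 * (Real.log ((g₁ : V3) 0) - Real.log ((g₁ : V3) 2)) := mul_le_mul_of_nonneg_right h1 hden3.le
          _ = (1/2) * ((Real.log ((g₁ : V3) 0) + Real.log ((g₂ : V3) 0)) - (Real.log ((g₁ : V3) 2) + Real.log ((g₂ : V3) 2))) := by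
              rw [hT3def, div_mul_half _ _ (ne_of_gt hden3)]
      have hmain := caseG1 ((g₁ : V3) 0) ((g₁ : V3) 1) ((g₁ : V3) 2) ((g₂ : V3) 0) ((g₂ : V3) 1) ((g₂ : V3) 2)
        ((projH π 0)⁻¹) ((projH π 1)⁻¹) ((projH π 2)⁻¹) η ha0 ha1 ha2 hb0 hb1 hb2 hw0 hw1 hw2
        hη hη1 ha01 ha11 ha20 hb01 hb11 hb21 hG (Or.inl hT1) (Or.inl hT2) (Or.inl hT3)
      filter_upwards [hmain, hBALL η hη hη1 hη2, Filter.eventually_ge_atTop 1] with l hm hballm hl1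
      obtain ⟨c, d, e, hc, hd, he, he0, he1, he2⟩ := hm
      have hJl : ⌈η * (l:ℝ)⌉₊ ≤ l := ceil_le_self hη hη1 l
      refine ⟨g₁ ^ (l - ⌈η * (l:ℝ)⌉₊) * g₂ ^ l, mul_mem (pow_mem hg1E _) (pow_mem hg2E _), ?_, hballm⟩
      refine Or.inl (Or.inl ?_)
      simp only [coneB, cone3, Set.mem_setOf_eq]
      refine ⟨c, d, e, hc, hd, he, ?_⟩
      funext k
      fin_cases k
      · show ((projH π)⁻¹ * ((g₁ ^ (l - ⌈η * (l:ℝ)⌉₊) * g₂ ^ l : V3ˣ) : V3)) 0 = _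
        rw [hXc]
        show (projH π 0)⁻¹ * (((g₁ : V3) 0) ^ (l - ⌈η * (l:ℝ)⌉₊) * ((g₂ : V3) 0) ^ l) = c * 1 + d * ((g₁ : V3) 0) ^ l + e * (((g₁ : V3) 0) ^ l * ((g₂ : V3) 0) ^ l)
        rw [hsplit ((g₁ : V3) 0) l ⌈η * (l:ℝ)⌉₊ ha0 hJl]
        calc (projH π 0)⁻¹ * (((g₁ : V3) 0) ^ l * (((g₁ : V3) 0))⁻¹ ^ ⌈η * (l:ℝ)⌉₊ * ((g₂ : V3) 0) ^ l)
            = (projH π 0)⁻¹ * (((g₁ : V3) 0) * ((g₂ : V3) 0)) ^ l * (((g₁ : V3) 0))⁻¹ ^ ⌈η * (l:ℝ)⌉₊ := by ring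
          _ = c + d * (((g₁ : V3) 0) ^ l) + e * (((g₁ : V3) 0) ^ l * ((g₂ : V3) 0) ^ l) := he0
          _ = c * 1 + d * ((g₁ : V3) 0) ^ l + e * (((g₁ : V3) 0) ^ l * ((g₂ : V3) 0) ^ l) := by ring
      · show ((projH π)⁻¹ * ((g₁ ^ (l - ⌈η * (l:ℝ)⌉₊) * g₂ ^ l : V3ˣ) : V3)) 1 = _
        rw [hXc]
        show (projH π 1)⁻¹ * (((g₁ : V3) 1) ^ (l - ⌈η * (l:ℝ)⌉₊) * ((g₂ : V3) 1) ^ l) = c * 1 + d * ((g₁ : V3) 1) ^ l + e * (((g₁ : V3) 1) ^ l * ((g₂ : V3) 1) ^ l)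
        rw [hsplit ((g₁ : V3) 1) l ⌈η * (l:ℝ)⌉₊ ha1 hJl]
        calc (projH π 1)⁻¹ * (((g₁ : V3) 1) ^ l * (((g₁ : V3) 1))⁻¹ ^ ⌈η * (l:ℝ)⌉₊ * ((g₂ : V3) 1) ^ l)
            = (projH π 1)⁻¹ * (((g₁ : V3) 1) * ((g₂ : V3) 1)) ^ l * (((g₁ : V3) 1))⁻¹ ^ ⌈η * (l:ℝ)⌉₊ := by ring
          _ = c + d * (((g₁ : V3) 1) ^ l) + e * (((g₁ : V3) 1) ^ l * ((g₂ : V3) 1) ^ l) := he1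
          _ = c * 1 + d * ((g₁ : V3) 1) ^ l + e * (((g₁ : V3) 1) ^ l * ((g₂ : V3) 1) ^ l) := by ring
      · show ((projH π)⁻¹ * ((g₁ ^ (l - ⌈η * (l:ℝ)⌉₊) * g₂ ^ l : V3ˣ) : V3)) 2 = _
        rw [hXc]
        show (projH π 2)⁻¹ * (((g₁ : V3) 2) ^ (l - ⌈η * (l:ℝ)⌉₊) * ((g₂ : V3) 2) ^ l) = c * 1 + d * ((g₁ : V3) 2) ^ l + e * (((g₁ : V3) 2) ^ l * ((g₂ : V3) 2) ^ l)
        rw [hsplit ((g₁ : V3) 2) l ⌈η * (l:ℝ)⌉₊ ha2 hJl]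
        calc (projH π 2)⁻¹ * (((g₁ : V3) 2) ^ l * (((g₁ : V3) 2))⁻¹ ^ ⌈η * (l:ℝ)⌉₊ * ((g₂ : V3) 2) ^ l)
            = (projH π 2)⁻¹ * (((g₁ : V3) 2) * ((g₂ : V3) 2)) ^ l * (((g₁ : V3) 2))⁻¹ ^ ⌈η * (l:ℝ)⌉₊ := by ring
          _ = c + d * (((g₁ : V3) 2) ^ l) + e * (((g₁ : V3) 2) ^ l * ((g₂ : V3) 2) ^ l) := he2
          _ = c * 1 + d * ((g₁ : V3) 2) ^ l + e * (((g₁ : V3) 2) ^ l * ((g₂ : V3) 2) ^ l) := by ring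
  obtain ⟨N, hN⟩ := Filter.eventually_atTop.mp MAIN
  refine ⟨(N:ℝ) + 1, by positivity, fun l hl => hN l ?_⟩
  have h1 : (N:ℝ) < (l:ℝ) := by linarith
  exact_mod_cast h1.le
end
end

section
/- Set g₁ = −96y² + 152y + 113, g₂ = 160y² + 32y − 31 and π = 192y² − 488y + 177 in F; these elements are totally positive. Let D = C̄_{e₁}([g₁|g₂]) ∪ C̄_{e₁}([g₂|g₁]) ⊂ ℝ₊³. Then π⁻¹ ∈ D, and the intersections π⁻¹D ∩ g₁g₂⁻¹D and π⁻¹D ∩ g₂⁻¹D are both nonempty. In particular, the translation property 'εD ∩ π⁻¹D = ∅ unless ε = g₁^{m₁}g₂^{m₂} with m₁, m₂ ∈ {0,1}' (Statement A.1 of the paper, due to Tsosie) fails for this data. -/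
noncomputable section

open Filter Set

-- ===================== auxiliary lemmas =====================

lemma cone3_mem (v w z : V3) (c d e : ℝ) (hc : 0 < c) (hd : 0 < d) (he : 0 < e) :
    c • v + d • w + e • z ∈ cone3 v w z := ⟨c, d, e, hc, hd, he, rfl⟩

lemma cone3_subset_closE1 (v w z : V3) (D A B C : ℝ) (hD : D ≠ 0)
    (hrep : ∀ j, D * eOne j = A * v j + B * w j + C * z j) :
    cone3 v w z ⊆ closE1 (cone3 v w z) := by
  rintro x ⟨c, d, e, hc, hd, he, rfl⟩
  refine ⟨min (min (c / (|A / D| + 1)) (d / (|B / D| + 1))) (e / (|C / D| + 1)), ?_, ?_⟩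
  · have h1 : 0 < |A / D| + 1 := by positivity
    have h2 : 0 < |B / D| + 1 := by positivity
    have h3 : 0 < |C / D| + 1 := by positivity
    exact lt_min (lt_min (by positivity) (by positivity)) (by positivity)
  · intro h h0 hh
    have hA : h * (|A / D| + 1) < c := by
      have h1 : 0 < |A / D| + 1 := by positivity
      have := lt_of_lt_of_le hh (le_trans (min_le_left _ _) (min_le_left _ _))
      exact (lt_div_iff₀ h1).mp this
    have hB : h * (|B / D| + 1) < d := by
      have h1 : 0 < |B / D| + 1 := by positivity
      have := lt_of_lt_of_le hh (le_trans (min_le_left _ _) (min_le_right _ _))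
      exact (lt_div_iff₀ h1).mp this
    have hC : h * (|C / D| + 1) < e := by
      have h1 : 0 < |C / D| + 1 := by positivity
      have := lt_of_lt_of_le hh (min_le_right _ _)
      exact (lt_div_iff₀ h1).mp this
    refine ⟨c + h * (A / D), d + h * (B / D), e + h * (C / D), ?_, ?_, ?_, ?_⟩
    · nlinarith [neg_abs_le (A / D), abs_nonneg (A / D)]
    · nlinarith [neg_abs_le (B / D), abs_nonneg (B / D)]
    · nlinarith [neg_abs_le (C / D), abs_nonneg (C / D)]
    · funext j
      have hj : eOne j = (A * v j + B * w j + C * z j) / D := by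
        rw [eq_div_iff hD]; linarith [hrep j]
      simp only [Pi.add_apply, Pi.smul_apply, smul_eq_mul]
      rw [hj]
      field_simp
      ring

lemma cubic_pos (tr s2 de : ℝ) (htr : 0 < tr) (hs2 : 0 < s2) (hde : 0 < de)
    (s : ℝ) (hchar : s ^ 3 - tr * s ^ 2 + s2 * s - de = 0) : 0 < s := by
  by_contra hs
  push_neg at hs
  nlinarith [sq_nonneg s, mul_nonpos_of_nonpos_of_nonneg hs (sq_nonneg s),
    mul_nonneg htr.le (sq_nonneg s), mul_nonpos_of_nonneg_of_nonpos hs2.le hs]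

/-- counterexample of the appendix: for the cubic field
`F = ℚ(y)` with `2y³ − 4y² − y + 1 = 0`, embedded in `ℝ³` via its three real
embeddings `y ↦ y j`, the elements `g₁ = −96y² + 152y + 113`,
`g₂ = 160y² + 32y − 31` and `π = 192y² − 488y + 177` are totally positive,
`π⁻¹` lies in the Shintani domain `D = C̄_{e₁}([g₁∣g₂]) ∪ C̄_{e₁}([g₂∣g₁])`, both
`π⁻¹D ∩ g₁g₂⁻¹D` and `π⁻¹D ∩ g₂⁻¹D` are nonempty, and in particular Tsosie's
translation property fails. -/
theorem stmt19 (y : Fin 3 → ℝ)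
    (hroot : ∀ j, 2 * y j ^ 3 - 4 * y j ^ 2 - y j + 1 = 0)
    (hinj : Function.Injective y)
    (g₁ g₂ π : V3)
    (hg₁ : g₁ = fun j => -96 * y j ^ 2 + 152 * y j + 113)
    (hg₂ : g₂ = fun j => 160 * y j ^ 2 + 32 * y j - 31)
    (hπ : π = fun j => 192 * y j ^ 2 - 488 * y j + 177) :
    IsPos g₁ ∧ IsPos g₂ ∧ IsPos π ∧
    π⁻¹ ∈ Bbar g₁ g₂ ∧
    (mulSet π⁻¹ (Bbar g₁ g₂) ∩ mulSet (g₁ * g₂⁻¹) (Bbar g₁ g₂)).Nonempty ∧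
    (mulSet π⁻¹ (Bbar g₁ g₂) ∩ mulSet g₂⁻¹ (Bbar g₁ g₂)).Nonempty ∧
    ¬ (∀ m₁ m₂ : ℤ,
        (mulSet (fun j => g₁ j ^ m₁ * g₂ j ^ m₂) (Bbar g₁ g₂) ∩
          mulSet π⁻¹ (Bbar g₁ g₂)).Nonempty →
        (m₁ = 0 ∨ m₁ = 1) ∧ (m₂ = 0 ∨ m₂ = 1)) := by
  -- pointwise value lemmas
  have e1 : ∀ j, g₁ j = -96 * y j ^ 2 + 152 * y j + 113 := fun j => by rw [hg₁]
  have e2 : ∀ j, g₂ j = 160 * y j ^ 2 + 32 * y j - 31 := fun j => by rw [hg₂]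
  have e3 : ∀ j, π j = 192 * y j ^ 2 - 488 * y j + 177 := fun j => by rw [hπ]
  -- total positivity
  have hPg1 : IsPos g₁ := by
    intro j
    rw [e1 j]
    refine cubic_pos 163 419 1 (by norm_num) (by norm_num) (by norm_num) _ ?_
    linear_combination ((-591104 : ℝ) + (-304128) * y j + 1216512 * y j ^ 2 +
      (-442368) * y j ^ 3) * hroot j
  have hPg2 : IsPos g₂ := by
    intro j
    rw [e2 j]
    refine cubic_pos 771 8963 1 (by norm_num) (by norm_num) (by norm_num) _ ?_
    linear_combination ((-1048576 : ℝ) + 860160 * y j + 5324800 * y j ^ 2 +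
      2048000 * y j ^ 3) * hroot j
  have hPπ : IsPos π := by
    intro j
    rw [e3 j]
    refine cubic_pos 515 5347 12769 (by norm_num) (by norm_num) (by norm_num) _ ?_
    linear_combination ((-9655552 : ℝ) + 30836736 * y j + (-19906560) * y j ^ 2 +
      3538944 * y j ^ 3) * hroot j
  have hg2ne : ∀ j, g₂ j ≠ 0 := fun j => (hPg2 j).ne'
  have hπne : ∀ j, π j ≠ 0 := fun j => (hPπ j).ne'
  -- distinct roots
  have hy01 : y 0 - y 1 ≠ 0 := sub_ne_zero.mpr (fun h => absurd (hinj h) (by decide))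
  have hy02 : y 0 - y 2 ≠ 0 := sub_ne_zero.mpr (fun h => absurd (hinj h) (by decide))
  -- e₁ representation for cone A = cone3 1 g₁ (g₁*g₂)
  have hDA : (8800 : ℝ) * ((y 0 - y 1) * (y 0 - y 2)) ≠ 0 := by
    exact mul_ne_zero (by norm_num) (mul_ne_zero hy01 hy02)
  have hrepA : ∀ j, (8800 : ℝ) * ((y 0 - y 1) * (y 0 - y 2)) * eOne j =
      (8800 * (y 1 * y 2) + 4852 * (y 1 + y 2) + 2676) * (1 : V3) j +
      (88 * (y 1 + y 2) - 231) * g₁ j +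
      (-12 * (y 1 + y 2) + 19) * (g₁ * g₂) j := by
    intro j
    fin_cases j <;>
      simp only [eOne, Fin.zero_eta, Fin.mk_one, Fin.reduceFinMk, Pi.mul_apply, Pi.one_apply, Matrix.cons_val_zero,
        Matrix.cons_val_one, Matrix.head_cons, Matrix.cons_val_two, Matrix.tail_cons] <;>
      rw [e1, e2]
    · linear_combination ((-12 * (y 1 + y 2) + 19) * (4736 + 7680 * y 0)) * hroot 0
    · linear_combination ((-12 * (y 1 + y 2) + 19) * (4736 + 7680 * y 1)) * hroot 1
    · linear_combination ((-12 * (y 1 + y 2) + 19) * (4736 + 7680 * y 2)) * hroot 2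
  have hsubA : coneB g₁ g₂ ⊆ coneBbar g₁ g₂ :=
    cone3_subset_closE1 _ _ _ _ _ _ _ hDA hrepA
  -- e₁ representation for cone B = cone3 1 g₂ (g₂*g₁)
  have hDB : (39776 : ℝ) * ((y 0 - y 1) * (y 0 - y 2)) ≠ 0 := by
    exact mul_ne_zero (by norm_num) (mul_ne_zero hy01 hy02)
  have hrepB : ∀ j, (39776 : ℝ) * ((y 0 - y 1) * (y 0 - y 2)) * eOne j =
      (39776 * (y 1 * y 2) + 21932 * (y 1 + y 2) + 12093) * (1 : V3) j +
      (-88 * (y 1 + y 2) + 231) * g₂ j +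
      (-20 * (y 1 + y 2) - 4) * (g₂ * g₁) j := by
    intro j
    fin_cases j <;>
      simp only [eOne, Fin.zero_eta, Fin.mk_one, Fin.reduceFinMk, Pi.mul_apply, Pi.one_apply, Matrix.cons_val_zero,
        Matrix.cons_val_one, Matrix.head_cons, Matrix.cons_val_two, Matrix.tail_cons] <;>
      rw [e1, e2]
    · linear_combination ((-20 * (y 1 + y 2) - 4) * (4736 + 7680 * y 0)) * hroot 0
    · linear_combination ((-20 * (y 1 + y 2) - 4) * (4736 + 7680 * y 1)) * hroot 1
    · linear_combination ((-20 * (y 1 + y 2) - 4) * (4736 + 7680 * y 2)) * hroot 2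
  have hsubB : coneB g₂ g₁ ⊆ coneBbar g₂ g₁ :=
    cone3_subset_closE1 _ _ _ _ _ _ _ hDB hrepB
  -- π⁻¹ ∈ Bbar
  have hπinvA : π⁻¹ ∈ coneB g₁ g₂ := by
    refine ⟨6954 / 3511475, 266 / 319225, 251 / 3511475, by norm_num, by norm_num,
      by norm_num, ?_⟩
    funext j
    simp only [Pi.inv_apply, Pi.add_apply, Pi.smul_apply, Pi.mul_apply, Pi.one_apply,
      smul_eq_mul, mul_one]
    symm
    apply eq_inv_of_mul_eq_one_left
    rw [e1 j, e2 j, e3 j]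
    linear_combination ((-99385472 / 3511475 : ℝ) + (17724928 / 319225) * y j +
      (64770048 / 319225) * y j ^ 2 + (-74022912 / 702295) * y j ^ 3) * hroot j
  have hπinvBbar : π⁻¹ ∈ Bbar g₁ g₂ := Or.inl (hsubA hπinvA)
  -- witness 1 : π⁻¹ D ∩ g₁g₂⁻¹ D
  set α₁ : V3 := (1 : ℝ) • (1 : V3) + (1 : ℝ) • g₁ + (1 / 10000 : ℝ) • (g₁ * g₂) with hα₁
  set β₁ : V3 := (219617 / 3174373400 : ℝ) • (1 : V3) + (381867729 / 1803621250 : ℝ) • g₂ +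
      (60617457 / 158718670000 : ℝ) • (g₂ * g₁) with hβ₁
  have hα₁B : α₁ ∈ Bbar g₁ g₂ :=
    Or.inl (hsubA (cone3_mem _ _ _ _ _ _ one_pos one_pos (by norm_num)))
  have hβ₁B : β₁ ∈ Bbar g₁ g₂ :=
    Or.inr (hsubB (cone3_mem _ _ _ _ _ _ (by norm_num) (by norm_num) (by norm_num)))
  have heq1 : (g₁ * g₂⁻¹) * β₁ = π⁻¹ * α₁ := by
    funext j
    simp only [hα₁, hβ₁, Pi.mul_apply, Pi.inv_apply, Pi.add_apply, Pi.smul_apply,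
      Pi.one_apply, smul_eq_mul, mul_one]
    have h2 := hg2ne j
    have h3 := hπne j
    field_simp
    rw [e1 j, e2 j, e3 j]
    linear_combination ((-1404055220261660224478881819840000000000 : ℝ) +
      (1788640743485370398549826081280000000000) * y j +
      (7249800452002391855033994526720000000000) * y j ^ 2 +
      (-2211383338455480235326479400960000000000) * y j ^ 3 +
      (-1723596483455922054742188687360000000000) * y j ^ 4 +
      (491286408586011036981146419200000000000) * y j ^ 5) * hroot j
  have hW1 : (mulSet π⁻¹ (Bbar g₁ g₂) ∩ mulSet (g₁ * g₂⁻¹) (Bbar g₁ g₂)).Nonempty :=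
    ⟨π⁻¹ * α₁, ⟨α₁, hα₁B, rfl⟩, ⟨β₁, hβ₁B, heq1⟩⟩
  -- witness 2 : π⁻¹ D ∩ g₂⁻¹ D
  set α₂ : V3 := (1 : ℝ) • (1 : V3) + (43 / 100 : ℝ) • g₁ + (1 / 1000000 : ℝ) • (g₁ * g₂)
    with hα₂
  set β₂ : V3 := (2571 / 45090531250 : ℝ) • (1 : V3) +
      (1718440853 / 1442897000000 : ℝ) • g₂ + (42639098059 / 360724250000 : ℝ) • (g₂ * g₁)
    with hβ₂
  have hα₂B : α₂ ∈ Bbar g₁ g₂ :=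
    Or.inl (hsubA (cone3_mem _ _ _ _ _ _ one_pos (by norm_num) (by norm_num)))
  have hβ₂B : β₂ ∈ Bbar g₁ g₂ :=
    Or.inr (hsubB (cone3_mem _ _ _ _ _ _ (by norm_num) (by norm_num) (by norm_num)))
  have heq2 : g₂⁻¹ * β₂ = π⁻¹ * α₂ := by
    funext j
    simp only [hα₂, hβ₂, Pi.mul_apply, Pi.inv_apply, Pi.add_apply, Pi.smul_apply,
      Pi.one_apply, smul_eq_mul, mul_one]
    have h2 := hg2ne j
    have h3 := hπne j
    field_simp
    rw [e1 j, e2 j, e3 j]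
    linear_combination ((-168413119287209653939914268700000000000000000000 : ℝ) +
      (253089585996486787204279020400000000000000000000) * y j +
      (787450337747903093452568374400000000000000000000) * y j ^ 2 +
      (-409061003173777827978427968000000000000000000000) * y j ^ 3) * hroot j
  have hW2 : (mulSet π⁻¹ (Bbar g₁ g₂) ∩ mulSet g₂⁻¹ (Bbar g₁ g₂)).Nonempty :=
    ⟨π⁻¹ * α₂, ⟨α₂, hα₂B, rfl⟩, ⟨β₂, hβ₂B, heq2⟩⟩
  refine ⟨hPg1, hPg2, hPπ, hπinvBbar, hW1, hW2, ?_⟩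
  intro H
  have hpow : (fun j => g₁ j ^ (1 : ℤ) * g₂ j ^ (-1 : ℤ)) = g₁ * g₂⁻¹ := by
    funext j
    simp [zpow_neg]
  have := (H 1 (-1) (by rw [hpow, Set.inter_comm]; exact hW1)).2
  rcases this with h | h <;> norm_num at h
end
end
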